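/- arXiv:1811.06509 — 4 statements merged into one kernel-verified Lean document; each statement's English description precedes it below -/
import Mathlib

section
/- The sum of the divisor function over odd integers up to x satisfies I(x) = (1/4) x log x + x·((log 2)/2 + γ/2 − 1/4) + O(√x) as x → ∞. -/
open Filter Real Finset
namespace OddDiv


/-- number of odd integers in [1,m] -/
def Oc (m : ℕ) : ℕ := ((Finset.Icc 1 m).filter (fun n => Odd n)).card

lemma Oc_eq (m : ℕ) : Oc m = (m + 1) / 2 := by
  induction m with
  | zero => simp [Oc]
  | succ n ih =>
    have h : Finset.Icc 1 (n+1) = insert (n+1) (Finset.Icc 1 n) := by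
      rw [← Finset.insert_Icc_right_eq_Icc_add_one (by omega)]
    rw [Oc, h, Finset.filter_insert]
    by_cases hodd : Odd (n+1)
    · rw [if_pos hodd, Finset.card_insert_of_notMem (by simp)]
      rw [← Oc, ih]
      rcases hodd with ⟨c, hc⟩; omega
    · rw [if_neg hodd, ← Oc, ih]
      rw [Nat.not_odd_iff_even] at hodd
      rcases hodd with ⟨c, hc⟩; omega

lemma Oc_real (m : ℕ) : |(Oc m : ℝ) - m / 2| ≤ 1 / 2 := by
  have h := Oc_eq m
  have h2 : 2 * Oc m = m ∨ 2 * Oc m = m + 1 := by omega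
  rw [abs_le]
  rcases h2 with h2 | h2
  · have h3 : (2 * Oc m : ℝ) = (m : ℝ) := by exact_mod_cast congrArg (Nat.cast : ℕ → ℝ) h2
    push_cast at h3 ⊢
    constructor <;> linarith
  · have h3 : (2 * Oc m : ℝ) = (m : ℝ) + 1 := by exact_mod_cast congrArg (Nat.cast : ℕ → ℝ) h2
    push_cast at h3 ⊢
    constructor <;> linarith

def P (N : ℕ) : Finset (ℕ × ℕ) :=
  (Finset.Icc 1 N ×ˢ Finset.Icc 1 N).filter (fun p => Odd p.1 ∧ Odd p.2 ∧ p.1 * p.2 ≤ N)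

lemma mem_P {N : ℕ} {p : ℕ × ℕ} : p ∈ P N ↔
    (1 ≤ p.1 ∧ p.1 ≤ N) ∧ (1 ≤ p.2 ∧ p.2 ≤ N) ∧ Odd p.1 ∧ Odd p.2 ∧ p.1 * p.2 ≤ N := by
  simp [P, Finset.mem_filter, Finset.mem_product, and_assoc]

lemma sum_d_eq_card (N : ℕ) :
    ∑ n ∈ (Finset.Icc 1 N).filter (fun n => Odd n), n.divisors.card = (P N).card := by
  rw [Finset.card_eq_sum_card_fiberwise (f := fun p : ℕ × ℕ => p.1 * p.2)
      (t := (Finset.Icc 1 N).filter (fun n => Odd n)) ?_]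
  · refine Finset.sum_congr rfl fun n hn => ?_
    simp only [Finset.mem_filter, Finset.mem_Icc] at hn
    obtain ⟨⟨hn1, hnN⟩, hodd⟩ := hn
    refine (Finset.card_bij (fun p _ => p.1) ?_ ?_ ?_).symm
    · rintro p hp
      simp only [Finset.mem_filter] at hp
      obtain ⟨hp, hpn⟩ := hp
      rw [mem_P] at hp
      rw [Nat.mem_divisors]
      exact ⟨⟨p.2, hpn.symm⟩, by omega⟩
    · rintro p hp q hq hpq
      simp only [Finset.mem_filter, mem_P] at hp hq
      have h1 : 1 ≤ p.1 := hp.1.1.1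
      have : p.1 * p.2 = q.1 * q.2 := by rw [hp.2, hq.2]
      have hpq1 : p.1 = q.1 := hpq
      rw [hpq1] at this
      have h2 : p.2 = q.2 := Nat.eq_of_mul_eq_mul_left (by omega) this
      exact Prod.ext hpq1 h2
    · rintro a ha
      rw [Nat.mem_divisors] at ha
      obtain ⟨⟨b, hb⟩, -⟩ := ha
      refine ⟨(a, b), ?_, rfl⟩
      have hoddab : Odd a ∧ Odd b := (Nat.odd_mul).mp (hb ▸ hodd)
      simp only [Finset.mem_filter, mem_P]
      have ha1 : 1 ≤ a := hoddab.1.pos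
      have hb1 : 1 ≤ b := hoddab.2.pos
      refine ⟨⟨⟨ha1, ?_⟩, ⟨hb1, ?_⟩, hoddab.1, hoddab.2, ?_⟩, hb.symm⟩ <;> nlinarith
  · rintro p hp
    rw [Finset.mem_coe, mem_P] at hp
    simp only [Finset.mem_coe, Finset.mem_filter, Finset.mem_Icc]
    exact ⟨⟨by nlinarith [hp.1.1, hp.2.1.1], hp.2.2.2.2⟩, Nat.odd_mul.mpr ⟨hp.2.2.1, hp.2.2.2.1⟩⟩

lemma hyperbola (N : ℕ) :
    (P N).card + Oc (Nat.sqrt N) ^ 2 =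
      2 * ∑ a ∈ (Finset.Icc 1 (Nat.sqrt N)).filter (fun n => Odd n), Oc (N / a) := by
  set K := Nat.sqrt N with hK
  set A : Finset (ℕ × ℕ) := (P N).filter (fun p => p.1 ≤ K) with hA
  set B : Finset (ℕ × ℕ) := (P N).filter (fun p => p.2 ≤ K) with hB
  have hsqle : K * K ≤ N := by simpa [Nat.pow_two] using Nat.sqrt_le' N
  have hKN : K ≤ N := Nat.sqrt_le_self N
  have hunion : A ∪ B = P N := by
    rw [hA, hB, ← Finset.filter_or]
    refine Finset.filter_true_of_mem fun p hp => ?_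
    by_contra hcon
    push_neg at hcon
    rw [mem_P] at hp
    have h1 : K + 1 ≤ p.1 := hcon.1
    have h2 : K + 1 ≤ p.2 := hcon.2
    have h3 : (K + 1) * (K + 1) ≤ p.1 * p.2 := Nat.mul_le_mul h1 h2
    have hlt : N < (K + 1) * (K + 1) := by
      simpa [Nat.succ_eq_add_one] using Nat.lt_succ_sqrt N
    have h4 := hp.2.2.2.2
    omega
  have hinter : A ∩ B =
      ((Finset.Icc 1 K).filter (fun n => Odd n)) ×ˢ ((Finset.Icc 1 K).filter (fun n => Odd n)) := by
    ext p
    simp only [hA, hB, Finset.mem_inter, Finset.mem_filter, Finset.mem_product, Finset.mem_Icc,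
      mem_P]
    constructor
    · rintro ⟨⟨h1, h2⟩, h3, h4⟩
      exact ⟨⟨⟨h1.1.1, h2⟩, h1.2.2.1⟩, ⟨h1.2.1.1, h4⟩, h1.2.2.2.1⟩
    · rintro ⟨⟨⟨h11, h12⟩, h13⟩, ⟨h21, h22⟩, h23⟩
      have hle : p.1 * p.2 ≤ N := le_trans (Nat.mul_le_mul h12 h22) hsqle
      exact ⟨⟨⟨⟨h11, le_trans h12 hKN⟩, ⟨h21, le_trans h22 hKN⟩, h13, h23, hle⟩, h12⟩,
        ⟨⟨⟨h11, le_trans h12 hKN⟩, ⟨h21, le_trans h22 hKN⟩, h13, h23, hle⟩, h22⟩⟩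
  have hAcard : A.card = ∑ a ∈ (Finset.Icc 1 K).filter (fun n => Odd n), Oc (N / a) := by
    rw [Finset.card_eq_sum_card_fiberwise (f := fun p : ℕ × ℕ => p.1)
        (t := (Finset.Icc 1 K).filter (fun n => Odd n)) ?_]
    · refine Finset.sum_congr rfl fun a ha => ?_
      simp only [Finset.mem_filter, Finset.mem_Icc] at ha
      obtain ⟨⟨ha1, haK⟩, haodd⟩ := ha
      rw [Oc]
      refine Finset.card_bij (fun p _ => p.2) ?_ ?_ ?_
      · rintro p hp
        simp only [hA, Finset.mem_filter, mem_P] at hp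
        obtain ⟨⟨hPp, hpK⟩, hpa⟩ := hp
        simp only [Finset.mem_filter, Finset.mem_Icc]
        refine ⟨⟨hPp.2.1.1, ?_⟩, hPp.2.2.2.1⟩
        rw [Nat.le_div_iff_mul_le (by omega)]
        calc p.2 * a = p.1 * p.2 := by rw [hpa]; ring
          _ ≤ N := hPp.2.2.2.2
      · rintro p hp q hq hpq
        simp only [hA, Finset.mem_filter, mem_P] at hp hq
        have h2 : p.2 = q.2 := hpq
        have h1 : p.1 = q.1 := by rw [hp.2, hq.2]
        exact Prod.ext h1 h2
      · rintro b hb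
        simp only [Finset.mem_filter, Finset.mem_Icc] at hb
        obtain ⟨⟨hb1, hbd⟩, hbodd⟩ := hb
        have hab : a * b ≤ N := by
          have h := (Nat.le_div_iff_mul_le (k := a) (by omega)).mp hbd
          rw [Nat.mul_comm]; exact h
        refine ⟨(a, b), ?_, rfl⟩
        simp only [hA, Finset.mem_filter, mem_P]
        have haN : a ≤ N := le_trans haK hKN
        have hbN : b ≤ N := by nlinarith
        refine ⟨?_, trivial⟩
        exact ⟨⟨⟨ha1, haN⟩, ⟨hb1, hbN⟩, haodd, hbodd, hab⟩, haK⟩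
    · rintro p hp
      simp only [hA, Finset.mem_coe, Finset.mem_filter, mem_P] at hp
      simp only [Finset.mem_coe, Finset.mem_filter, Finset.mem_Icc]
      exact ⟨⟨hp.1.1.1, hp.2⟩, hp.1.2.2.1⟩
  have hBcard : B.card = A.card := by
    refine Finset.card_bij (fun p _ => (p.2, p.1)) ?_ ?_ ?_
    · rintro p hp
      simp only [hA, hB, Finset.mem_filter, mem_P] at hp ⊢
      obtain ⟨h1, h2⟩ := hp
      exact ⟨⟨h1.2.1, h1.1, h1.2.2.2.1, h1.2.2.1, by rw [Nat.mul_comm]; exact h1.2.2.2.2⟩, h2⟩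
    · rintro p hp q hq hpq
      have h1 : p.2 = q.2 := congrArg Prod.fst hpq
      have h2 : p.1 = q.1 := congrArg Prod.snd hpq
      exact Prod.ext h2 h1
    · rintro q hq
      refine ⟨(q.2, q.1), ?_, rfl⟩
      simp only [hA, hB, Finset.mem_filter, mem_P] at hq ⊢
      obtain ⟨h1, h2⟩ := hq
      exact ⟨⟨h1.2.1, h1.1, h1.2.2.2.1, h1.2.2.1, by rw [Nat.mul_comm]; exact h1.2.2.2.2⟩, h2⟩
  have hic : (A ∩ B).card = Oc K ^ 2 := by
    rw [hinter, Finset.card_product, ← Oc, sq]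
  have hkey := Finset.card_union_add_card_inter A B
  rw [hunion, hic, hAcard, hBcard, hAcard] at hkey
  omega


lemma harmonic_eq_sum_Icc (n : ℕ) :
    ((harmonic n : ℚ) : ℝ) = ∑ a ∈ Finset.Icc 1 n, (1 / (a : ℝ)) := by
  induction n with
  | zero => simp [harmonic]
  | succ m ih =>
    rw [harmonic_succ, ← Finset.insert_Icc_right_eq_Icc_add_one (by omega), Finset.sum_insert (by simp)]
    push_cast
    rw [ih]; push_cast; ring

lemma harmonic_bound {n : ℕ} (hn : 1 ≤ n) :
    |(∑ a ∈ Finset.Icc 1 n, (1 / (a : ℝ))) - (Real.log n + Real.eulerMascheroniConstant)| ≤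
      1 / n := by
  have h1 := Real.eulerMascheroniSeq_lt_eulerMascheroniConstant n
  have h2 := Real.eulerMascheroniConstant_lt_eulerMascheroniSeq' n
  rw [Real.eulerMascheroniSeq] at h1
  rw [Real.eulerMascheroniSeq', if_neg (by omega)] at h2
  rw [← harmonic_eq_sum_Icc]
  have hn0 : (0:ℝ) < n := by exact_mod_cast hn
  have hlog : Real.log (n + 1) - Real.log n ≤ 1 / n := by
    rw [← Real.log_div (by positivity) (by positivity)]
    have := Real.log_le_sub_one_of_pos (x := ((n:ℝ)+1)/n) (by positivity)
    have h3 : ((n:ℝ)+1)/n - 1 = 1 / n := by field_simp; ring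
    linarith
  rw [abs_le]
  constructor <;> linarith

lemma odd_split (K : ℕ) :
    ∑ a ∈ (Finset.Icc 1 K).filter (fun n => Odd n), (1 / (a : ℝ)) =
      (∑ a ∈ Finset.Icc 1 K, (1 / (a : ℝ))) -
        (1 / 2) * ∑ b ∈ Finset.Icc 1 (K / 2), (1 / (b : ℝ)) := by
  have hsplit := Finset.sum_filter_add_sum_filter_not (Finset.Icc 1 K)
    (fun n => Odd n) (fun a => (1 / (a : ℝ)))
  have heven : ∑ a ∈ (Finset.Icc 1 K).filter (fun n => ¬ Odd n), (1 / (a : ℝ)) =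
      (1 / 2) * ∑ b ∈ Finset.Icc 1 (K / 2), (1 / (b : ℝ)) := by
    rw [Finset.mul_sum]
    refine Finset.sum_nbij' (i := fun a => a / 2) (j := fun b => 2 * b) ?_ ?_ ?_ ?_ ?_
    · intro a ha
      simp only [Finset.mem_filter, Finset.mem_Icc, Nat.not_odd_iff_even] at ha
      obtain ⟨⟨h1, h2⟩, h3⟩ := ha
      simp only [Finset.mem_Icc]
      rcases h3 with ⟨c, hc⟩
      omega
    · intro b hb
      simp only [Finset.mem_Icc] at hb
      simp only [Finset.mem_filter, Finset.mem_Icc, Nat.not_odd_iff_even]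
      exact ⟨⟨by omega, by omega⟩, b, by ring⟩
    · intro a ha
      simp only [Finset.mem_filter, Finset.mem_Icc, Nat.not_odd_iff_even] at ha
      obtain ⟨-, c, hc⟩ := ha
      show 2 * (a / 2) = a
      omega
    · intro b hb
      show 2 * b / 2 = b
      omega
    · intro a ha
      simp only [Finset.mem_filter, Finset.mem_Icc, Nat.not_odd_iff_even] at ha
      obtain ⟨⟨h1, -⟩, c, hc⟩ := ha
      have ha2 : a = 2 * (a / 2) := by omega
      rw [ha2]
      push_cast
      have : (0:ℝ) < (a/2 : ℕ) := by
        have : 1 ≤ a / 2 := by omega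
        exact_mod_cast this
      push_cast at this
      rw [Nat.mul_div_cancel_left _ (by norm_num : 0 < 2)]
      field_simp
  linarith

end OddDiv

open Filter Real OddDiv

set_option maxHeartbeats 1000000 in
theorem odd_divisor_sum_asymptotic :
    (fun x : ℝ =>
        (∑ n ∈ (Finset.Icc 1 ⌊x⌋₊).filter (fun n => Odd n), (n.divisors.card : ℝ)) -
          ((1 / 4) * x * Real.log x +
            x * (Real.log 2 / 2 + Real.eulerMascheroniConstant / 2 - 1 / 4)))
      =O[atTop] fun x : ℝ => Real.sqrt x := by
  rw [Asymptotics.isBigO_iff]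
  refine ⟨100, ?_⟩
  filter_upwards [eventually_ge_atTop (200:ℝ)] with x hx
  set N := ⌊x⌋₊ with hNdef
  set K := Nat.sqrt N with hKdef
  set k : ℝ := (K : ℝ) with hkdef
  set γ := Real.eulerMascheroniConstant with hγ
  have hxpos : (0:ℝ) < x := by linarith
  have hNx : (N:ℝ) ≤ x := Nat.floor_le (by positivity)
  have hxN : x < (N:ℝ) + 1 := Nat.lt_floor_add_one x
  have hN200 : 200 ≤ N := Nat.le_floor (by exact_mod_cast hx)
  have hK14 : 14 ≤ K := by
    rw [hKdef, Nat.le_sqrt]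
    omega
  have hk14 : (14:ℝ) ≤ k := by rw [hkdef]; exact_mod_cast hK14
  have hkpos : (0:ℝ) < k := by linarith
  have hKsq : k^2 ≤ (N:ℝ) := by rw [hkdef, hKdef]; exact_mod_cast Nat.sqrt_le' N
  have hKsq' : (N:ℝ) < (k+1)^2 := by
    rw [hkdef, hKdef]
    have h := Nat.lt_succ_sqrt' N
    exact_mod_cast h
  clear_value k γ
  set F := (Finset.Icc 1 K).filter (fun n => Odd n) with hF
  set T := ∑ a ∈ F, ((Oc (N/a) : ℝ)) with hT
  set Hodd := ∑ a ∈ F, (1 / (a:ℝ)) with hHodd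
  -- step A : exact identity
  have hSid : (∑ n ∈ (Finset.Icc 1 N).filter (fun n => Odd n), (n.divisors.card : ℝ))
      = 2 * T - ((Oc K : ℝ))^2 := by
    have h1 := sum_d_eq_card N
    have h2 := hyperbola N
    rw [← hKdef] at h2
    have h0 := congrArg (Nat.cast : ℕ → ℝ) h1
    have h3 := congrArg (Nat.cast : ℕ → ℝ) h2
    push_cast at h0 h3
    rw [← hF, ← hT] at h3
    linarith
  -- step B : T vs (x/2) * Hodd
  have hTbound : |T - x/2 * Hodd| ≤ k := by
    have hrw : T - x/2 * Hodd = ∑ a ∈ F, ((Oc (N/a) : ℝ) - x/2 * (1/(a:ℝ))) := by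
      rw [Finset.sum_sub_distrib, ← Finset.mul_sum]
    have hcard : (F.card : ℝ) ≤ k := by
      have h1 : F.card ≤ K := by
        refine le_trans (Finset.card_filter_le _ _) ?_
        simp [Nat.card_Icc]
      rw [hkdef]
      exact_mod_cast h1
    rw [hrw]
    refine le_trans (Finset.abs_sum_le_sum_abs _ _) ?_
    have hterm : ∀ a ∈ F, |(Oc (N/a) : ℝ) - x/2 * (1/(a:ℝ))| ≤ 1 := by
      intro a ha
      simp only [hF, Finset.mem_filter, Finset.mem_Icc] at ha
      obtain ⟨⟨ha1, haK⟩, -⟩ := ha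
      have ha1' : (1:ℝ) ≤ (a:ℝ) := by exact_mod_cast ha1
      have hapos : (0:ℝ) < (a:ℝ) := by linarith
      have hOc := Oc_real (N/a)
      have hdm : a * (N/a) + N % a = N := Nat.div_add_mod N a
      have hmod : N % a < a := Nat.mod_lt _ (by omega)
      have hdmR : (a:ℝ) * ((N/a : ℕ):ℝ) + ((N % a : ℕ):ℝ) = (N:ℝ) := by exact_mod_cast hdm
      have hmodR : ((N % a : ℕ):ℝ) + 1 ≤ (a:ℝ) := by exact_mod_cast hmod
      have hmodR0 : (0:ℝ) ≤ ((N % a : ℕ):ℝ) := by positivity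
      have hx2a : x/2 * (1/(a:ℝ)) = x / (2*(a:ℝ)) := by
        field_simp
      have h1 : ((N/a : ℕ):ℝ)/2 ≤ x / (2*(a:ℝ)) := by
        rw [div_le_div_iff₀ (by norm_num) (by positivity)]
        nlinarith
      have h2 : x / (2*(a:ℝ)) ≤ ((N/a : ℕ):ℝ)/2 + 1/2 := by
        rw [div_le_iff₀ (by positivity)]
        nlinarith
      rw [hx2a, abs_le]
      rw [abs_le] at hOc
      constructor <;> linarith [hOc.1, hOc.2]
    calc ∑ a ∈ F, |(Oc (N/a) : ℝ) - x/2 * (1/(a:ℝ))| ≤ ∑ a ∈ F, (1:ℝ) :=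
          Finset.sum_le_sum hterm
      _ = (F.card : ℝ) := by simp
      _ ≤ k := hcard
  -- step C/D : Hodd asymptotics
  have hHoddBound : |Hodd - ((1/4) * Real.log x + Real.log 2 / 2 + γ/2)| ≤ 5/k := by
    set M := K / 2 with hMdef
    set m : ℝ := (M : ℝ) with hmdef
    have hM7 : 7 ≤ M := by rw [hMdef]; omega
    have hm7 : (7:ℝ) ≤ m := by rw [hmdef]; exact_mod_cast hM7
    have hmpos : (0:ℝ) < m := by linarith
    have h2m1 : 2*m ≤ k := by
      have h : 2 * M ≤ K := by omega
      rw [hmdef, hkdef]; exact_mod_cast h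
    have h2m2 : k ≤ 2*m + 1 := by
      have h : K ≤ 2 * M + 1 := by omega
      rw [hmdef, hkdef]; exact_mod_cast h
    clear_value m
    have hsplit := odd_split K
    rw [← hMdef, ← hF, ← hHodd] at hsplit
    have d1 := harmonic_bound (n := K) (by omega)
    have d2 := harmonic_bound (n := M) (by omega)
    rw [← hγ, ← hkdef] at d1
    rw [← hγ, ← hmdef] at d2
    rw [abs_le] at d1 d2
    -- 1/m ≤ 3/k and 1/k ≤ 1/k
    have hq2 : 1/m ≤ 3/k := by
      rw [div_le_div_iff₀ hmpos hkpos]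
      linarith
    -- log m vs log k - log 2
    have hlml : Real.log (2*m) ≤ Real.log k := by
      apply Real.log_le_log (by positivity)
      linarith
    have hlm2 : Real.log (2*m) = Real.log 2 + Real.log m := Real.log_mul (by norm_num) (by positivity)
    have hlmu : Real.log k - Real.log (2*m) ≤ 3/k := by
      rw [← Real.log_div (by positivity) (by positivity)]
      have h1 := Real.log_le_sub_one_of_pos (x := k/(2*m)) (by positivity)
      have h2 : k/(2*m) - 1 ≤ 3/k := by
        rw [div_sub_one (by positivity), div_le_div_iff₀ (by positivity) hkpos]
        nlinarith
      linarith
    -- log x vs 2 log k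
    have hlx1 : 2 * Real.log k ≤ Real.log x := by
      have h1 : Real.log (k^2) ≤ Real.log x := Real.log_le_log (by positivity) (by linarith)
      rw [Real.log_pow] at h1
      push_cast at h1
      linarith
    have hlx2 : Real.log x - 2 * Real.log k ≤ 3/k := by
      have h0 : Real.log (k^2) = 2 * Real.log k := by
        rw [Real.log_pow]; push_cast; ring
      have h1 : Real.log x - Real.log (k^2) = Real.log (x / k^2) := by
        rw [Real.log_div (by positivity) (by positivity)]
      have h2 := Real.log_le_sub_one_of_pos (x := x/(k^2)) (by positivity)
      have h3 : x/(k^2) - 1 ≤ 3/k := by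
        rw [div_sub_one (by positivity), div_le_div_iff₀ (by positivity) hkpos]
        nlinarith
      linarith
    have hkinv : (0:ℝ) < 1/k := by positivity
    have hminv : (0:ℝ) < 1/m := by positivity
    -- combine
    have e1 : 3/k = 3*(1/k) := by ring
    have e2 : 5/k = 5*(1/k) := by ring
    rw [e1] at hq2 hlmu hlx2
    rw [hsplit, e2, abs_le]
    constructor <;> linarith [d1.1, d1.2, d2.1, d2.2]
  -- final assembly
  have hOcK := Oc_real K
  rw [abs_le] at hOcK hTbound hHoddBound
  have hxk : x * (5/k) ≤ 10 * k := by
    rw [mul_div_assoc', div_le_iff₀ hkpos]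
    nlinarith
  have hOsq : |((Oc K : ℝ))^2 - x/4| ≤ 2*k := by
    rw [abs_le]
    constructor <;> nlinarith [hOcK.1, hOcK.2]
  have hS := hSid
  have hkx : k ≤ Real.sqrt x := by
    rw [show k = Real.sqrt (k^2) by rw [Real.sqrt_sq hkpos.le]]
    exact Real.sqrt_le_sqrt (by linarith)
  have hsx : (0:ℝ) ≤ Real.sqrt x := Real.sqrt_nonneg x
  rw [abs_le] at hOsq
  have hxHodd : |x * Hodd - x * ((1/4) * Real.log x + Real.log 2 / 2 + γ/2)| ≤ 10 * k := by
    rw [← mul_sub, abs_mul, abs_of_pos hxpos]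
    calc x * |Hodd - ((1/4) * Real.log x + Real.log 2 / 2 + γ/2)| ≤ x * (5/k) := by
          apply mul_le_mul_of_nonneg_left _ hxpos.le
          rw [abs_le]; exact hHoddBound
      _ ≤ 10 * k := hxk
  rw [abs_le] at hxHodd
  rw [Real.norm_eq_abs, Real.norm_eq_abs, abs_of_nonneg hsx, abs_le]
  rw [hSid]
  constructor <;> nlinarith [hTbound.1, hTbound.2, hxHodd.1, hxHodd.2, hOsq.1, hOsq.2]
end

section
/- The partial sums of D(n) satisfy Σ_{1 ≤ n ≤ x} D(n) = (log 2)·x + O(√x) as x → ∞. -/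
open Filter Real Finset Topology

lemma alt_sum_bounds : ∀ (n : ℕ) (f : ℕ → ℝ), Antitone f → (∀ i, 0 ≤ f i) →
    0 ≤ ∑ i ∈ Finset.range n, (-1)^i * f i ∧ ∑ i ∈ Finset.range n, (-1)^i * f i ≤ f 0 := by
  intro n
  induction n using Nat.strong_induction_on with
  | _ n ih =>
    match n with
    | 0 => intro f hf h0; simp [h0 0]
    | 1 => intro f hf h0; simp [h0 0]
    | (m+2) =>
      intro f hf h0
      have hre : ∑ i ∈ Finset.range (m+2), (-1:ℝ)^i * f i
          = (∑ i ∈ Finset.range m, (-1)^i * f (i+2)) + (f 0 - f 1) := by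
        rw [Finset.sum_range_succ' (fun i => (-1:ℝ)^i * f i) (m+1),
          Finset.sum_range_succ' (fun i => (-1:ℝ)^(i+1) * f (i+1)) m]
        have he : ∀ i, (-1:ℝ)^(i+1+1) * f (i+1+1) = (-1)^i * f (i+2) := by
          intro i; rw [pow_succ, pow_succ]; ring_nf
        rw [Finset.sum_congr rfl (fun i _ => he i)]
        simp [pow_succ]; ring
      obtain ⟨h1, h2⟩ := ih m (by omega) (fun i => f (i+2))
        (fun a b hab => hf (by omega)) (fun i => h0 _)
      have hf01 : f 1 ≤ f 0 := hf (by omega)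
      have hf12 : f 2 ≤ f 1 := hf (by omega)
      constructor
      · rw [hre]; linarith
      · rw [hre]; linarith

lemma altA_bounds (f : ℕ → ℝ) (hf : Antitone f) (h0 : ∀ i, 0 ≤ f i) (n : ℕ) :
    |∑ i ∈ Finset.range n, (-1)^i * f i| ≤ f 0 := by
  obtain ⟨h1, h2⟩ := alt_sum_bounds n f hf h0
  rw [abs_le]; constructor <;> linarith [h0 0]

noncomputable def A (M : ℕ) : ℝ := ∑ i ∈ Finset.range M, (-1)^i * (1/(i+1) : ℝ)

lemma A_two_mul (m : ℕ) : A (2*m) = (harmonic (2*m) : ℝ) - (harmonic m : ℝ) := by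
  induction m with
  | zero => simp [A]
  | succ m ih =>
    have h2 : 2*(m+1) = (2*m + 1) + 1 := by ring
    rw [h2, A, Finset.sum_range_succ, Finset.sum_range_succ, ← A, ih,
      harmonic_succ, harmonic_succ, harmonic_succ]
    push_cast
    have hm1 : ((m:ℝ)+1) ≠ 0 := by positivity
    have hm2 : (2*(m:ℝ)+1) ≠ 0 := by positivity
    have hm3 : (2*(m:ℝ)+1+1) ≠ 0 := by positivity
    have hpow : (-1:ℝ)^(2*m) = 1 := by
      rw [pow_mul]; norm_num
    rw [pow_succ, hpow]
    field_simp
    ring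

lemma tendsto_A : Tendsto A atTop (𝓝 (Real.log 2)) := by
  have hf : Antitone (fun i : ℕ => (1/(i+1) : ℝ)) := by
    intro a b hab
    apply div_le_div_of_nonneg_left (by norm_num) (by positivity)
    exact_mod_cast by omega
  have hf0 : Tendsto (fun i : ℕ => (1/(i+1) : ℝ)) atTop (𝓝 0) :=
    tendsto_one_div_add_atTop_nhds_zero_nat
  obtain ⟨l, hl⟩ := hf.tendsto_alternating_series_of_tendsto_zero hf0
  have htm : Tendsto (fun m : ℕ => 2*m) atTop atTop :=
    tendsto_atTop_mono (fun n => by dsimp; omega) tendsto_id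
  have h2 : Tendsto (fun m => A (2*m)) atTop (𝓝 (Real.log 2)) := by
    have key : ∀ᶠ m : ℕ in atTop, ((harmonic (2*m) : ℝ) - Real.log (2*m))
        - ((harmonic m : ℝ) - Real.log m) + Real.log 2 = A (2*m) := by
      filter_upwards [eventually_ge_atTop 1] with m hm
      rw [A_two_mul]
      have hm0 : (m:ℝ) ≠ 0 := by positivity
      have : Real.log (2*m) = Real.log 2 + Real.log m := by
        push_cast
        rw [Real.log_mul (by norm_num) hm0]
      rw [this]; push_cast; ring
    apply Tendsto.congr' key
    have ha : Tendsto (fun m : ℕ => (harmonic (2*m) : ℝ) - Real.log (2*m)) atTop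
        (𝓝 Real.eulerMascheroniConstant) := by
      have h := Real.tendsto_harmonic_sub_log.comp htm
      apply h.congr
      intro m
      simp [Function.comp]
    have hb := Real.tendsto_harmonic_sub_log
    have := (ha.sub hb).add_const (Real.log 2)
    simpa using this
  have h2' : Tendsto (fun m => A (2*m)) atTop (𝓝 l) := hl.comp htm
  have : l = Real.log 2 := tendsto_nhds_unique h2' h2
  rwa [this] at hl

lemma A_err (K : ℕ) : |Real.log 2 - A K| ≤ 1/(K+1) := by
  have hshift : ∀ M : ℕ, A (K + M) - A K
      = (-1)^K * ∑ i ∈ Finset.range M, (-1)^i * (1/(K+i+1) : ℝ) := by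
    intro M
    rw [A, A, Finset.sum_range_add, Finset.mul_sum]
    rw [add_sub_cancel_left]
    apply Finset.sum_congr rfl
    intro i _
    rw [pow_add]
    push_cast
    ring
  have htend : Tendsto (fun M => A (K + M) - A K) atTop (𝓝 (Real.log 2 - A K)) := by
    have : Tendsto (fun M : ℕ => K + M) atTop atTop :=
      tendsto_atTop_mono (fun n => by dsimp; omega) tendsto_id
    exact (tendsto_A.comp this).sub_const (A K)
  have hbound : ∀ M : ℕ, |A (K + M) - A K| ≤ 1/(K+1) := by
    intro M
    rw [hshift, abs_mul, abs_pow, abs_neg, abs_one, one_pow, one_mul]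
    have := altA_bounds (fun i => (1/(K+i+1) : ℝ)) ?_ ?_ M
    · simpa using this
    · intro a b hab
      apply div_le_div_of_nonneg_left (by norm_num) (by positivity)
      have : (a:ℝ) ≤ b := by exact_mod_cast hab
      linarith
    · intro i; positivity
  have : Tendsto (fun M => |A (K + M) - A K|) atTop (𝓝 |Real.log 2 - A K|) :=
    htend.abs
  exact le_of_tendsto this (Filter.Eventually.of_forall hbound)

def eps (d : ℕ) : ℤ := if Odd d then 1 else -1

lemma D_eq (n : ℕ) :
    ((n.divisors.filter fun j => Odd (n / j)).card : ℤ) -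
      ((n.divisors.filter fun j => Even (n / j)).card : ℤ)
    = ∑ d ∈ n.divisors, eps d := by
  rw [← Nat.sum_div_divisors n eps]
  unfold eps
  rw [Finset.sum_ite, Finset.sum_const, Finset.sum_const]
  have : (n.divisors.filter fun j => Even (n / j))
      = (n.divisors.filter fun j => ¬ Odd (n / j)) := by
    apply Finset.filter_congr
    intro j _
    simp [Nat.not_odd_iff_even]
  rw [this]
  simp
  ring

lemma swap_sum (N : ℕ) :
    ∑ n ∈ Finset.Icc 1 N, ∑ d ∈ n.divisors, eps d
      = ∑ d ∈ Finset.Icc 1 N, eps d * (N / d : ℕ) := by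
  have hIcc : Finset.Icc 1 N = Finset.Ioc 0 N := rfl
  rw [hIcc]
  rw [Finset.sum_comm' (s := Finset.Ioc 0 N) (t := fun n => n.divisors)
    (t' := Finset.Ioc 0 N) (s' := fun d => (Finset.Ioc 0 N).filter (fun n => d ∣ n))
    (f := fun _ d => eps d) ?_]
  · apply Finset.sum_congr rfl
    intro d _
    rw [Finset.sum_const, Nat.Ioc_filter_dvd_card_eq_div]
    simp [mul_comm]
  · intro n d
    simp only [Finset.mem_Ioc, Nat.mem_divisors, Finset.mem_filter]
    constructor
    · rintro ⟨⟨hn0, hnN⟩, hd, hne⟩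
      have hd0 : 0 < d := Nat.pos_of_dvd_of_pos hd hn0
      have hdn : d ≤ n := Nat.le_of_dvd hn0 hd
      exact ⟨⟨⟨hn0, hnN⟩, hd⟩, hd0, hdn.trans hnN⟩
    · rintro ⟨⟨⟨hn0, hnN⟩, hd⟩, _, _⟩
      exact ⟨⟨hn0, hnN⟩, hd, by omega⟩

lemma eps_cast (d : ℕ) : ((eps d : ℤ) : ℝ) = (-1)^(d+1) := by
  unfold eps
  rcases Nat.even_or_odd d with h | h
  · rw [if_neg (by simpa [Nat.not_odd_iff_even] using h)]
    rw [Odd.neg_one_pow (by exact h.add_one)]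
    norm_num
  · rw [if_pos h, Even.neg_one_pow (by exact h.add_one)]
    norm_num

lemma main_est (N : ℕ) (hN : 1 ≤ N) :
    |((∑ d ∈ Finset.Icc 1 N, eps d * (N / d : ℕ) : ℤ) : ℝ) - N * Real.log 2|
      ≤ 4 * Real.sqrt N := by
  set K := N.sqrt with hK
  have hK1 : 1 ≤ K := Nat.sqrt_pos.mpr hN
  have hKN : K ≤ N := Nat.sqrt_le_self N
  have hNlt : N < (K+1) * (K+1) := Nat.lt_succ_sqrt N
  have hcast : ((∑ d ∈ Finset.Icc 1 N, eps d * (N / d : ℕ) : ℤ) : ℝ)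
      = ∑ d ∈ Finset.Ioc 0 N, (-1:ℝ)^(d+1) * (N / d : ℕ) := by
    rw [show Finset.Icc 1 N = Finset.Ioc 0 N from rfl, Int.cast_sum]
    exact Finset.sum_congr rfl fun d _ => by
      rw [Int.cast_mul, eps_cast, Int.cast_natCast]
  rw [hcast]
  have hsplit : ∑ d ∈ Finset.Ioc 0 N, (-1:ℝ)^(d+1) * (N / d : ℕ)
      = (∑ d ∈ Finset.Ioc 0 K, (-1:ℝ)^(d+1) * (N / d : ℕ))
        + ∑ d ∈ Finset.Ioc K N, (-1:ℝ)^(d+1) * (N / d : ℕ) :=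
    (Finset.sum_Ioc_consecutive _ (Nat.zero_le K) hKN).symm
  rw [hsplit]
  -- tail bound
  have htail : |∑ d ∈ Finset.Ioc K N, (-1:ℝ)^(d+1) * (N / d : ℕ)| ≤ K := by
    have hre : ∑ d ∈ Finset.Ioc K N, (-1:ℝ)^(d+1) * (N / d : ℕ)
        = (-1)^K * ∑ i ∈ Finset.range (N - K), (-1)^i * ((N / (K+1+i) : ℕ) : ℝ) := by
      rw [← Finset.Ico_add_one_add_one_eq_Ioc, Finset.sum_Ico_eq_sum_range, Finset.mul_sum,
        show N + 1 - (K + 1) = N - K from by omega]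
      refine Finset.sum_congr rfl fun i _ => ?_
      rw [show (-1:ℝ)^(K+1+i+1) = (-1)^K * (-1)^i from by
        rw [show K+1+i+1 = (K+i)+2 from by ring, pow_add, pow_add]; ring]
      ring
    rw [hre, abs_mul, abs_pow, abs_neg, abs_one, one_pow, one_mul]
    have hanti : Antitone (fun i => ((N / (K+1+i) : ℕ) : ℝ)) := by
      intro a b hab
      show ((N / (K+1+b) : ℕ) : ℝ) ≤ ((N / (K+1+a) : ℕ) : ℝ)
      exact_mod_cast Nat.div_le_div_left (by omega) (by omega)
    have hb := altA_bounds _ hanti (fun i => by positivity) (N - K)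
    refine hb.trans ?_
    show ((N / (K+1+0) : ℕ) : ℝ) ≤ (K : ℝ)
    norm_num
    have h3 : N / (K+1) < K + 1 := by
      rw [Nat.div_lt_iff_lt_mul (by omega)]
      exact hNlt
    exact_mod_cast (by omega : N / (K+1) ≤ K)
  -- head: floor vs real division
  have hterm : ∀ d ∈ Finset.Ioc 0 K,
      |(-1:ℝ)^(d+1) * (N / d : ℕ) - (-1:ℝ)^(d+1) * ((N:ℝ)/d)| ≤ 1 := by
    intro d hd
    rw [Finset.mem_Ioc] at hd
    have hd0 : (0:ℝ) < d := by exact_mod_cast hd.1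
    have hlow : ((N / d : ℕ) : ℝ) ≤ (N:ℝ)/d := Nat.cast_div_le
    have hup : (N:ℝ)/d ≤ ((N / d : ℕ) : ℝ) + 1 := by
      rw [div_le_iff₀ hd0]
      have h1 : N < (N/d + 1) * d := (Nat.div_lt_iff_lt_mul hd.1).mp (Nat.lt_succ_self _)
      have h2 : (N:ℝ) < ((N / d : ℕ) + 1) * d := by exact_mod_cast h1
      linarith
    rw [← mul_sub, abs_mul, abs_pow, abs_neg, abs_one, one_pow, one_mul, abs_le]
    constructor <;> linarith
  have hhead : |(∑ d ∈ Finset.Ioc 0 K, (-1:ℝ)^(d+1) * (N / d : ℕ))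
      - ∑ d ∈ Finset.Ioc 0 K, (-1:ℝ)^(d+1) * ((N:ℝ)/d)| ≤ K := by
    rw [← Finset.sum_sub_distrib]
    refine (Finset.abs_sum_le_sum_abs _ _).trans ?_
    refine (Finset.sum_le_sum hterm).trans ?_
    rw [Finset.sum_const, Nat.card_Ioc]
    simp
  have hmain : ∑ d ∈ Finset.Ioc 0 K, (-1:ℝ)^(d+1) * ((N:ℝ)/d) = N * A K := by
    rw [A, Finset.mul_sum, ← Finset.Ico_add_one_add_one_eq_Ioc, Finset.sum_Ico_eq_sum_range, zero_add,
      show K + 1 - 1 = K from by omega]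
    refine Finset.sum_congr rfl fun i _ => ?_
    rw [show (-1:ℝ)^(1+i+1) = (-1)^i from by
      rw [show 1+i+1 = i+2 from by ring, pow_add]; norm_num]
    push_cast
    ring
  have hA : |(N:ℝ) * A K - N * Real.log 2| ≤ K + 1 := by
    rw [← mul_sub, abs_mul, abs_of_nonneg (by positivity : (0:ℝ) ≤ (N:ℝ))]
    have h1 : |A K - Real.log 2| ≤ 1/(K+1) := by rw [abs_sub_comm]; exact A_err K
    have h2 : (N:ℝ) * |A K - Real.log 2| ≤ N * (1/(K+1)) :=
      mul_le_mul_of_nonneg_left h1 (by positivity)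
    refine h2.trans ?_
    rw [mul_one_div, div_le_iff₀ (by positivity)]
    have : (N:ℝ) < ((K:ℝ)+1) * ((K:ℝ)+1) := by exact_mod_cast hNlt
    nlinarith
  have hKle : (K:ℝ) ≤ Real.sqrt N := by
    rw [Real.le_sqrt' (by exact_mod_cast hK1)]
    exact_mod_cast Nat.sqrt_le' N
  have hone : (1:ℝ) ≤ Real.sqrt N := by
    rw [show (1:ℝ) = Real.sqrt 1 from by simp]
    exact Real.sqrt_le_sqrt (by exact_mod_cast hN)
  set X := ∑ d ∈ Finset.Ioc 0 K, (-1:ℝ)^(d+1) * (N / d : ℕ) with hX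
  set H1 := ∑ d ∈ Finset.Ioc 0 K, (-1:ℝ)^(d+1) * ((N:ℝ)/d) with hH1
  set Y := ∑ d ∈ Finset.Ioc K N, (-1:ℝ)^(d+1) * (N / d : ℕ) with hY
  have hdecomp : X + Y - (N:ℝ) * Real.log 2
      = (X - H1) + (H1 - N * Real.log 2) + Y := by ring
  rw [hdecomp]
  calc |(X - H1) + (H1 - (N:ℝ) * Real.log 2) + Y|
      ≤ |X - H1| + |H1 - (N:ℝ) * Real.log 2| + |Y| :=
        (abs_add_le _ _).trans (add_le_add (abs_add_le _ _) le_rfl)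
    _ ≤ K + (K + 1) + K := by
        refine add_le_add (add_le_add hhead ?_) htail
        rw [hmain]; exact hA
    _ ≤ 4 * Real.sqrt N := by linarith

theorem parity_difference_average :
    (fun x : ℝ =>
        (∑ n ∈ Finset.Icc 1 ⌊x⌋₊,
            (((n.divisors.filter fun j => Odd (n / j)).card : ℤ) -
              ((n.divisors.filter fun j => Even (n / j)).card : ℤ) : ℤ) : ℤ) -
          Real.log 2 * x)
      =O[atTop] fun x : ℝ => Real.sqrt x := by
  rw [Asymptotics.isBigO_iff]
  use 5
  filter_upwards [eventually_ge_atTop (1:ℝ)] with x hx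
  set N := ⌊x⌋₊ with hNdef
  have hN1 : 1 ≤ N := Nat.le_floor (by exact_mod_cast hx)
  have hNx : (N:ℝ) ≤ x := Nat.floor_le (by linarith)
  have hxN : x < N + 1 := Nat.lt_floor_add_one x
  have hsum : (∑ n ∈ Finset.Icc 1 N,
        (((n.divisors.filter fun j => Odd (n / j)).card : ℤ) -
          ((n.divisors.filter fun j => Even (n / j)).card : ℤ)))
      = ∑ d ∈ Finset.Icc 1 N, eps d * (N / d : ℕ) := by
    rw [← swap_sum]
    exact Finset.sum_congr rfl fun n _ => D_eq n
  rw [hsum]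
  have hest := main_est N hN1
  have hsq : Real.sqrt N ≤ Real.sqrt x := Real.sqrt_le_sqrt hNx
  have hone : (1:ℝ) ≤ Real.sqrt x := by
    rw [show (1:ℝ) = Real.sqrt 1 from by simp]
    exact Real.sqrt_le_sqrt hx
  have hlog : Real.log 2 ≤ 1 := by
    have := Real.log_two_lt_d9
    linarith
  have hlog0 : 0 ≤ Real.log 2 := Real.log_nonneg (by norm_num)
  have htri : |((∑ d ∈ Finset.Icc 1 N, eps d * (N / d : ℕ) : ℤ) : ℝ) - Real.log 2 * x|
      ≤ |((∑ d ∈ Finset.Icc 1 N, eps d * (N / d : ℕ) : ℤ) : ℝ) - N * Real.log 2|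
        + Real.log 2 * (x - N) := by
    have h1 : ((∑ d ∈ Finset.Icc 1 N, eps d * (N / d : ℕ) : ℤ) : ℝ) - Real.log 2 * x
        = (((∑ d ∈ Finset.Icc 1 N, eps d * (N / d : ℕ) : ℤ) : ℝ) - N * Real.log 2)
          - Real.log 2 * (x - N) := by ring
    rw [h1]
    refine (abs_sub _ _).trans ?_
    gcongr
    rw [abs_of_nonneg (by nlinarith)]
  rw [Real.norm_eq_abs, Real.norm_eq_abs, abs_of_nonneg (Real.sqrt_nonneg x)]
  have hfinal : Real.log 2 * (x - N) ≤ 1 := by nlinarith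
  calc |((∑ d ∈ Finset.Icc 1 N, eps d * (N / d : ℕ) : ℤ) : ℝ) - Real.log 2 * x|
      ≤ 4 * Real.sqrt N + Real.log 2 * (x - N) := by linarith
    _ ≤ 4 * Real.sqrt x + 1 := by linarith
    _ ≤ 5 * Real.sqrt x := by linarith
end

section
/- If w is a balanced infinite binary word with letter-frequency β_w = lim_{n→∞} (1/n)·#{1 ≤ j ≤ n : w(j) = b}, then for every positive integer n, |β_w·n − #{1 ≤ j ≤ n : w(j) = b}| ≤ 1. -/
open Filter

inductive Letter
  | a
  | b
  deriving DecidableEq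

/-- Number of occurrences of the letter `b` in the factor `w(n), …, w(n+L-1)`. -/
def countB (w : ℕ → Letter) (n L : ℕ) : ℕ :=
  ((Finset.Ico n (n + L)).filter fun j => w j = Letter.b).card

/-- A word is balanced if any two factors of equal length contain numbers of `b`'s
differing by at most 1. -/
def IsBalanced (w : ℕ → Letter) : Prop :=
  ∀ n₁ n₂ L : ℕ, 1 ≤ n₁ → 1 ≤ n₂ → 1 ≤ L →
    |(countB w n₁ L : ℤ) - (countB w n₂ L : ℤ)| ≤ 1

lemma countB_add (w : ℕ → Letter) (m a b : ℕ) :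
    countB w m (a + b) = countB w m a + countB w (m + a) b := by
  unfold countB
  have h : m + (a + b) = (m + a) + b := by omega
  rw [h, ← Finset.card_union_of_disjoint, ← Finset.filter_union,
    Finset.Ico_union_Ico_eq_Ico (by omega) (by omega)]
  exact Finset.disjoint_filter_filter (Finset.Ico_disjoint_Ico_consecutive m (m + a) (m + a + b))

lemma countB_mul (w : ℕ → Letter) (hw : IsBalanced w) (n : ℕ) (hn : 1 ≤ n) :
    ∀ k : ℕ, |(countB w 1 (k * n) : ℤ) - k * countB w 1 n| ≤ k := by
  intro k
  induction k with
  | zero => simp [countB]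
  | succ k ih =>
    have h1 : countB w 1 ((k + 1) * n) = countB w 1 (k * n) + countB w (1 + k * n) n := by
      rw [show (k + 1) * n = k * n + n by ring, countB_add]
    have h2 : |(countB w (1 + k * n) n : ℤ) - countB w 1 n| ≤ 1 :=
      hw (1 + k * n) 1 n (by omega) le_rfl hn
    push_cast [h1]
    have := abs_add_le ((countB w 1 (k * n) : ℤ) - k * countB w 1 n)
      ((countB w (1 + k * n) n : ℤ) - countB w 1 n)
    calc _ ≤ _ := (le_of_eq (congrArg abs (by ring))).trans this
      _ ≤ (k : ℤ) + 1 := add_le_add ih h2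

theorem balanced_frequency_bound (w : ℕ → Letter) (hw : IsBalanced w) (β : ℝ)
    (hβ : Tendsto
      (fun n : ℕ => (((Finset.Icc 1 n).filter fun j => w j = Letter.b).card : ℝ) / n)
      atTop (nhds β))
    (n : ℕ) (hn : 1 ≤ n) :
    |β * n - (((Finset.Icc 1 n).filter fun j => w j = Letter.b).card : ℝ)| ≤ 1 := by
  have hc : ∀ t : ℕ, ((Finset.Icc 1 t).filter fun j => w j = Letter.b).card = countB w 1 t := by
    intro t
    unfold countB
    rw [add_comm, Finset.Ico_add_one_right_eq_Icc]
  set S : ℕ → ℝ := fun t => (countB w 1 t : ℝ) with hS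
  have hβ' : Tendsto (fun m : ℕ => S m / m) atTop (nhds β) := by
    refine hβ.congr fun m => ?_
    simp [hS, hc]
  have hnR : (0 : ℝ) < n := by exact_mod_cast hn
  have hmul : Tendsto (fun k : ℕ => k * n) atTop atTop :=
    tendsto_atTop_atTop.mpr fun b => ⟨b, fun k hk => le_trans hk (Nat.le_mul_of_pos_right k hn)⟩
  have hlim : Tendsto (fun k : ℕ => S (k * n) / (k * n)) atTop (nhds β) := by
    have := hβ'.comp hmul
    refine this.congr fun k => ?_
    simp [Function.comp]
  -- eventual bound
  have key : ∀ k : ℕ, 1 ≤ k → |S (k * n) / (k * n) - S n / n| ≤ 1 / n := by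
    intro k hk
    have hkR : (0 : ℝ) < k := by exact_mod_cast hk
    have hint := countB_mul w hw n hn k
    have hreal : |S (k * n) - k * S n| ≤ k := by
      have h := (@Int.cast_le ℝ _ _ _).mpr hint
      push_cast at h
      simpa [hS] using h
    have heq : S (k * n) / ((k : ℝ) * n) - S n / n = (S (k * n) - k * S n) / (k * n) := by
      field_simp
    calc |S (k * n) / ((k : ℝ) * n) - S n / n|
        = |S (k * n) - k * S n| / ((k : ℝ) * n) := by
          rw [heq, abs_div, abs_of_pos (show (0:ℝ) < (k:ℝ) * n by positivity)]
      _ ≤ (k : ℝ) / (k * n) := by gcongr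
      _ = 1 / n := by field_simp
  have hbound : |β - S n / n| ≤ 1 / n := by
    have habs : Tendsto (fun k : ℕ => |S (k * n) / (k * n) - S n / n|) atTop
        (nhds |β - S n / n|) := ((hlim.sub_const _).abs)
    refine le_of_tendsto habs ?_
    filter_upwards [eventually_ge_atTop 1] with k hk using key k hk
  rw [hc n]
  have : β * n - S n = (β - S n / n) * n := by field_simp
  rw [this, abs_mul, abs_of_pos hnR]
  calc |β - S n / n| * n ≤ (1 / n) * n := by
        exact mul_le_mul_of_nonneg_right hbound hnR.le
    _ = 1 := by field_simp
end

section
/- Let w : ℕ → {a,b} and suppose w is balanced with letter frequency β_w ∈ (0,1) for the letter b (so |β_w n − #{j ≤ n : w(j) = b}| ≤ 1 for all n). Define D_w(n) = Σ_{d ∣ n, w(d)=b} (−1)^{n/d+1} and M_w(x) = Σ_{n ≤ x} D_w(n)(1 − n/x). Then for every δ > 0, M_w(x) = (β_w log 2 / 2)·x + O_δ(x^{1/3+δ}) as x → ∞. -/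
open Filter

/-- The parity-difference function associated to the word `w`. -/
def Dw (w : ℕ → Letter) (n : ℕ) : ℤ :=
  ∑ d ∈ n.divisors, (if w d = Letter.b then (-1 : ℤ) ^ (n / d + 1) else 0)

/-- The mollified partial sums of `Dw`. -/
noncomputable def Mw (w : ℕ → Letter) (x : ℝ) : ℝ :=
  ∑ n ∈ Finset.Icc 1 ⌊x⌋₊, (Dw w n : ℝ) * (1 - n / x)

section Aux

open Finset intervalIntegral MeasureTheory

lemma abel_id (a g : ℕ → ℝ) (N : ℕ) : ∀ M, ∑ q ∈ Icc (N+1) M, a q * g q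
    = (∑ j ∈ Icc (N+1) M, a j) * g M
      + ∑ q ∈ Ico (N+1) M, (∑ j ∈ Icc (N+1) q, a j) * (g q - g (q+1)) := by
  intro M
  induction M with
  | zero => simp
  | succ M ih =>
    rcases lt_or_ge (M+1) (N+1) with h | h
    · rw [show Icc (N+1) (M+1) = ∅ from Icc_eq_empty (by omega),
        show Ico (N+1) (M+1) = ∅ from Ico_eq_empty (by omega)]
      simp
    · rcases eq_or_lt_of_le h with h1 | h1
      · rw [← h1]
        simp [mul_comm]
      · rw [Finset.sum_Icc_succ_top (show N+1 ≤ M+1 by omega) (fun q => a q * g q),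
          Finset.sum_Icc_succ_top (show N+1 ≤ M+1 by omega) a,
          Finset.sum_Ico_succ_top (show N+1 ≤ M by omega), ih]
        ring

lemma abel_bound (a g : ℕ → ℝ) (N M : ℕ) (B : ℝ)
    (hA : ∀ k, k ≤ M → |∑ j ∈ Icc (N+1) k, a j| ≤ B) :
    |∑ q ∈ Icc (N+1) M, a q * g q|
      ≤ B * |g M| + B * ∑ q ∈ Ico (N+1) M, |g q - g (q+1)| := by
  rw [abel_id]
  refine (abs_add_le _ _).trans (add_le_add ?_ ?_)
  · rw [abs_mul]
    exact mul_le_mul_of_nonneg_right (hA M le_rfl) (abs_nonneg _)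
  · refine (Finset.abs_sum_le_sum_abs _ _).trans ?_
    rw [Finset.mul_sum]
    refine Finset.sum_le_sum fun q hq => ?_
    rw [abs_mul]
    exact mul_le_mul_of_nonneg_right (hA q (Finset.mem_Ico.mp hq).2.le) (abs_nonneg _)

lemma alt_partial (N k : ℕ) : |∑ j ∈ Icc (N+1) k, ((-1:ℝ))^(j+1)| ≤ 1 := by
  rw [← Finset.Ico_add_one_right_eq_Icc, Finset.sum_Ico_eq_sum_range]
  have : ∀ i, ((-1:ℝ))^(N+1+i+1) = ((-1:ℝ))^(N) * (-1)^i := by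
    intro i
    rw [show N+1+i+1 = N + (i + 2) by omega, pow_add]
    ring_nf
  simp_rw [this, ← Finset.mul_sum, abs_mul, abs_pow, abs_neg, abs_one, one_pow, one_mul,
    neg_one_geom_sum]
  split_ifs <;> simp

lemma telescope_Ico (f : ℕ → ℝ) (a : ℕ) : ∀ b, a ≤ b →
    ∑ q ∈ Ico a b, (f q - f (q+1)) = f a - f b := by
  intro b
  induction b with
  | zero => intro h; interval_cases a; simp
  | succ b ih =>
    intro h
    rcases eq_or_lt_of_le h with h1 | h1
    · rw [← h1]; simp
    · rw [Finset.sum_Ico_succ_top (by omega), ih (by omega)]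
      ring

lemma harmonic_sqrt : ∀ Q : ℕ, ∑ q ∈ Icc 1 Q, (1:ℝ)/q ≤ 2 * Real.sqrt Q := by
  intro Q
  induction Q with
  | zero => simp
  | succ Q ih =>
    rw [Finset.sum_Icc_succ_top (by omega)]
    have h1 : Real.sqrt Q ≤ Real.sqrt (Q+1) := Real.sqrt_le_sqrt (by push_cast; linarith)
    have h2 : (1:ℝ)/(Q+1) ≤ 2 * Real.sqrt (Q+1) - 2 * Real.sqrt Q := by
      have hs : Real.sqrt (Q+1) ^ 2 = (Q+1:ℝ) := Real.sq_sqrt (by positivity)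
      have hs2 : Real.sqrt Q ^ 2 = (Q:ℝ) := Real.sq_sqrt (by positivity)
      have hpos : 0 < Real.sqrt (Q+1) := Real.sqrt_pos.mpr (by positivity)
      have hnn : 0 ≤ Real.sqrt Q := Real.sqrt_nonneg _
      rw [div_le_iff₀ (by positivity)]
      nlinarith [sq_nonneg (Real.sqrt (Q+1) - Real.sqrt Q)]
    push_cast
    push_cast at ih h2
    linarith

lemma integral_inv_one_add : ∫ t in (0:ℝ)..1, (1+t)⁻¹ = Real.log 2 := by
  rw [show (∫ t in (0:ℝ)..1, (1+t)⁻¹) = ∫ t in (0:ℝ)..1, (fun u : ℝ => u⁻¹) (1 + t) from rfl,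
    intervalIntegral.integral_comp_add_left (fun u : ℝ => u⁻¹) 1]
  rw [integral_inv]
  · norm_num
  · rw [Set.uIcc_of_le (by norm_num)]
    intro hc
    rcases hc with ⟨h1, h2⟩
    norm_num at h1

lemma alt_harmonic_range (Q : ℕ) :
    |∑ i ∈ range Q, (-1:ℝ)^i / (i+1) - Real.log 2| ≤ 1/(Q+1) := by
  have hQc : (0:ℝ) < Q + 1 := by positivity
  have hint_pow : ∀ i : ℕ, IntervalIntegrable (fun t : ℝ => (-t)^i) volume 0 1 :=
    fun i => ((continuous_neg.pow i).intervalIntegrable _ _)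
  have h1 : ∀ i : ℕ, (∫ t in (0:ℝ)..1, (-t)^i) = (-1:ℝ)^i / (i+1) := by
    intro i
    have : (∫ t in (0:ℝ)..1, (-t)^i) = ∫ t in (0:ℝ)..1, (-1:ℝ)^i * t^i := by
      apply intervalIntegral.integral_congr
      intro t _
      dsimp only
      rw [neg_pow]
    rw [this, intervalIntegral.integral_const_mul, integral_pow]
    norm_num
    ring
  have h2 : ∑ i ∈ range Q, (-1:ℝ)^i / (i+1) = ∫ t in (0:ℝ)..1, ∑ i ∈ range Q, (-t)^i := by
    rw [intervalIntegral.integral_finset_sum (fun i _ => hint_pow i)]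
    exact (Finset.sum_congr rfl fun i _ => (h1 i).symm)
  have hinv_cont : ContinuousOn (fun t : ℝ => (1+t)⁻¹) (Set.uIcc (0:ℝ) 1) := by
    apply ContinuousOn.inv₀ (by fun_prop)
    intro t ht
    rw [Set.uIcc_of_le (by norm_num)] at ht
    have := ht.1
    intro hc
    nlinarith
  have hint_inv : IntervalIntegrable (fun t : ℝ => (1+t)⁻¹) volume 0 1 :=
    hinv_cont.intervalIntegrable
  have hint_mix : IntervalIntegrable (fun t : ℝ => (-t)^Q * (1+t)⁻¹) volume 0 1 :=
    (((continuous_neg.pow Q).continuousOn).mul hinv_cont).intervalIntegrable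
  have h3 : (∫ t in (0:ℝ)..1, ∑ i ∈ range Q, (-t)^i)
      = ∫ t in (0:ℝ)..1, ((1+t)⁻¹ - (-t)^Q * (1+t)⁻¹) := by
    apply intervalIntegral.integral_congr
    intro t ht
    rw [Set.uIcc_of_le (by norm_num)] at ht
    have ht0 := ht.1
    have hne : (-t : ℝ) ≠ 1 := by intro hc; nlinarith
    have hpos : (0:ℝ) < 1 + t := by linarith
    dsimp only
    rw [geom_sum_eq hne, div_eq_iff (show (-t) - 1 ≠ 0 by intro hc; nlinarith)]
    field_simp
    ring
  have h4 : (∫ t in (0:ℝ)..1, ((1+t)⁻¹ - (-t)^Q * (1+t)⁻¹))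
      = Real.log 2 - ∫ t in (0:ℝ)..1, (-t)^Q * (1+t)⁻¹ := by
    rw [intervalIntegral.integral_sub hint_inv hint_mix, integral_inv_one_add]
  have h5 : |∫ t in (0:ℝ)..1, (-t)^Q * (1+t)⁻¹| ≤ 1/(Q+1) := by
    refine (intervalIntegral.abs_integral_le_integral_abs (by norm_num)).trans ?_
    have : (∫ t in (0:ℝ)..1, |(-t)^Q * (1+t)⁻¹|) ≤ ∫ t in (0:ℝ)..1, t^Q := by
      apply intervalIntegral.integral_mono_on (by norm_num) hint_mix.abs
        ((continuous_pow Q).intervalIntegrable _ _)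
      intro t ht
      rcases ht with ⟨ht0, ht1⟩
      have hpos : (0:ℝ) < 1 + t := by linarith
      rw [abs_mul, abs_pow, abs_neg, abs_of_nonneg ht0, abs_of_pos (inv_pos.mpr hpos)]
      have h6 : (1+t)⁻¹ ≤ 1 := by
        rw [inv_le_one_iff₀]
        right; linarith
      nlinarith [pow_nonneg ht0 Q]
    refine this.trans ?_
    rw [integral_pow]
    norm_num
  rw [h2, h3, h4]
  rw [abs_sub_comm, show Real.log 2 - (Real.log 2 - ∫ t in (0:ℝ)..1, (-t)^Q * (1+t)⁻¹)
    = ∫ t in (0:ℝ)..1, (-t)^Q * (1+t)⁻¹ by ring]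
  exact h5

lemma alt_harmonic (Q : ℕ) :
    |∑ q ∈ Icc 1 Q, (-1:ℝ)^(q+1) * (1/q) - Real.log 2| ≤ 1/(Q+1) := by
  have : ∑ q ∈ Icc 1 Q, (-1:ℝ)^(q+1) * (1/q) = ∑ i ∈ range Q, (-1:ℝ)^i / (i+1) := by
    rw [← Finset.Ico_add_one_right_eq_Icc, Finset.sum_Ico_eq_sum_range]
    apply Finset.sum_congr rfl
    intro i _
    rw [show 1 + i + 1 = i + 2 by omega, pow_add]
    push_cast
    ring
  rw [this]
  exact alt_harmonic_range Q

noncomputable def gw (x : ℝ) (q d : ℕ) : ℝ := max 0 (1 - d*q/x)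

lemma gw_nonneg (x : ℝ) (q d : ℕ) : 0 ≤ gw x q d := le_max_left _ _

lemma gw_le_one {x : ℝ} (hx : 0 < x) (q d : ℕ) : gw x q d ≤ 1 := by
  unfold gw
  have : (0:ℝ) ≤ (d*q:ℝ)/x := by positivity
  rw [max_le_iff]
  constructor <;> linarith

lemma gw_anti_d {x : ℝ} (hx : 0 < x) (q : ℕ) {d d' : ℕ} (h : d ≤ d') :
    gw x q d' ≤ gw x q d := by
  unfold gw
  apply max_le_max le_rfl
  have hdd : (d:ℝ) ≤ (d':ℝ) := by exact_mod_cast h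
  have : ((d:ℝ)*q)/x ≤ ((d':ℝ)*q)/x := by gcongr
  linarith

lemma gw_anti_q {x : ℝ} (hx : 0 < x) (d : ℕ) {q q' : ℕ} (h : q ≤ q') :
    gw x q' d ≤ gw x q d := by
  unfold gw
  apply max_le_max le_rfl
  have hdd : (q:ℝ) ≤ (q':ℝ) := by exact_mod_cast h
  have : ((d:ℝ)*q)/x ≤ ((d:ℝ)*q')/x := by gcongr
  linarith

lemma gw_succ {x : ℝ} (hx : 0 < x) (q d : ℕ) :
    gw x q d - gw x (q+1) d = min ((d:ℝ)/x) (gw x q d) := by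
  unfold gw
  have hu : (0:ℝ) ≤ (d:ℝ)/x := by positivity
  have he : ((d:ℝ)*(q+1:ℕ))/x = (d:ℝ)*q/x + d/x := by push_cast; field_simp
  rw [he]
  rcases le_total (1 - (d:ℝ)*q/x) 0 with h1 | h1
  · rw [max_eq_left h1, max_eq_left (by linarith), min_eq_right hu]
    ring
  · rw [max_eq_right h1]
    rcases le_total (1 - ((d:ℝ)*q/x + d/x)) 0 with h2 | h2
    · rw [max_eq_left h2, min_eq_right (by linarith)]
      ring
    · rw [max_eq_right h2, min_eq_left (by linarith)]
      ring

lemma gw_min_le {x : ℝ} (hx : 0 < x) (q d : ℕ) :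
    min ((d:ℝ)/x) (gw x q d) ≤ 1/(q+1) := by
  have hq1 : (0:ℝ) < (q:ℝ)+1 := by positivity
  rcases le_total ((d:ℝ)/x) (1/(q+1)) with h | h
  · exact (min_le_left _ _).trans h
  · refine (min_le_right _ _).trans ?_
    unfold gw
    rw [div_le_div_iff₀ hq1 hx] at h
    rw [max_le_iff]
    refine ⟨by positivity, ?_⟩
    have hh : (q:ℝ)/(q+1) ≤ ((d:ℝ)*q)/x := by
      rw [div_le_div_iff₀ hq1 hx]
      nlinarith [Nat.cast_nonneg (α := ℝ) q]
    have heq : 1 - (q:ℝ)/(q+1) = 1/(q+1) := by field_simp; ring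
    linarith

lemma gauss_Icc (K : ℕ) : ∑ d ∈ Icc 1 K, (d:ℝ) = K*(K+1)/2 := by
  have h2 : (∑ d ∈ range (K+1), d) * 2 = (K+1) * K := Finset.sum_range_id_mul_two (K+1)
  have h3 : ∑ d ∈ Icc 1 K, (d:ℝ) = ∑ d ∈ range (K+1), (d:ℝ) := by
    rw [Finset.range_eq_Ico, Finset.sum_eq_sum_Ico_succ_bot (by omega : 0 < K+1),
      Finset.Ico_add_one_right_eq_Icc]
    simp
  have h4 := congrArg (fun n : ℕ => (n:ℝ)) h2
  push_cast at h4
  rw [h3]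
  linarith

set_option maxHeartbeats 1000000 in
lemma gw_sum {x : ℝ} {q : ℕ} (hq : 1 ≤ q) (hqx : (q:ℝ) ≤ x) :
    |∑ d ∈ Icc 1 ⌊x⌋₊, gw x q d - (x/(2*q) - 1/2)| ≤ q/(8*x) := by
  have hq0 : (0:ℝ) < q := by exact_mod_cast hq
  have hx : (0:ℝ) < x := lt_of_lt_of_le hq0 hqx
  set m := ⌊x⌋₊ with hm
  set K := ⌊x/q⌋₊ with hK
  have hy1 : (1:ℝ) ≤ x/q := by rw [le_div_iff₀ hq0]; linarith
  have hy0 : (0:ℝ) < x/q := by linarith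
  have hKy : (K:ℝ) ≤ x/q := Nat.floor_le hy0.le
  have hyK : x/q < (K:ℝ) + 1 := Nat.lt_floor_add_one _
  have hKm : K ≤ m := Nat.floor_mono (div_le_self hx.le (by exact_mod_cast hq))
  have hIccIoc : ∀ n : ℕ, Icc 1 n = Ioc 0 n := by
    intro n; ext z; simp; omega
  have hsplit : ∑ d ∈ Icc 1 m, gw x q d = ∑ d ∈ Icc 1 K, gw x q d := by
    rw [hIccIoc m, ← Finset.sum_Ioc_consecutive _ (Nat.zero_le K) hKm, ← hIccIoc K]
    have hz : ∑ d ∈ Ioc K m, gw x q d = 0 := by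
      apply Finset.sum_eq_zero
      intro d hd
      have hdK : K + 1 ≤ d := (Finset.mem_Ioc.mp hd).1
      have hdy : x/q < (d:ℝ) := lt_of_lt_of_le hyK (by exact_mod_cast hdK)
      have : (1:ℝ) - d*q/x < 0 := by
        rw [div_lt_iff₀ hq0] at hdy
        have : x < (d:ℝ)*q := by linarith
        rw [sub_neg]
        rw [lt_div_iff₀ hx]
        linarith
      unfold gw
      rw [max_eq_left this.le]
    rw [hz, add_zero]
  have hval : ∀ d ∈ Icc 1 K, gw x q d = 1 - d*q/x := by
    intro d hd
    have hdK : d ≤ K := (Finset.mem_Icc.mp hd).2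
    have hdy : (d:ℝ) ≤ x/q := le_trans (show (d:ℝ) ≤ (K:ℝ) by exact_mod_cast hdK) hKy
    have : (0:ℝ) ≤ 1 - d*q/x := by
      rw [le_div_iff₀ hq0] at hdy
      rw [sub_nonneg, div_le_one hx]
      linarith
    unfold gw
    rw [max_eq_right this]
  have hform : ∑ d ∈ Icc 1 m, gw x q d = K - (q/x) * (K*(K+1)/2) := by
    rw [hsplit, Finset.sum_congr rfl hval]
    rw [Finset.sum_sub_distrib, Finset.sum_const, Nat.card_Icc]
    simp only [Nat.add_sub_cancel, nsmul_eq_mul, mul_one]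
    have : ∑ d ∈ Icc 1 K, (d:ℝ)*q/x = (q/x) * ∑ d ∈ Icc 1 K, (d:ℝ) := by
      rw [Finset.mul_sum]
      apply Finset.sum_congr rfl
      intro d _
      ring
    rw [this, gauss_Icc]
  rw [hform]
  set y := x/q with hy
  set k := (K:ℝ) with hkr
  have hxqy : x = q * y := by rw [hy]; field_simp
  have hq8 : (q:ℝ)/(8*x) = 1/(8*y) := by rw [hxqy]; field_simp
  have hx2q : x/(2*q) = y/2 := by rw [hxqy]; field_simp
  have hqx' : (q:ℝ)/x = 1/y := by rw [hxqy]; field_simp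
  rw [hq8, hx2q, hqx']
  have hkey : k - 1/y * (k*(k+1)/2) - (y/2 - 1/2) = ((y-k) - (y-k)^2)/(2*y) := by
    field_simp
    ring
  rw [hkey]
  have hθ0 : 0 ≤ y - k := by linarith
  have hθ1 : y - k < 1 := by linarith
  have hnum0 : 0 ≤ (y-k) - (y-k)^2 := by nlinarith
  have hnum1 : (y-k) - (y-k)^2 ≤ 1/4 := by nlinarith [sq_nonneg ((y-k) - 1/2)]
  rw [abs_of_nonneg (by positivity)]
  rw [div_le_div_iff₀ (by linarith) (by linarith)]
  nlinarith

lemma Mw_eq (w : ℕ → Letter) {x : ℝ} (hx : 1 ≤ x) :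
    Mw w x = ∑ q ∈ Icc 1 ⌊x⌋₊, (-1:ℝ)^(q+1)
      * ∑ d ∈ Icc 1 ⌊x⌋₊, (if w d = Letter.b then (1:ℝ) else 0) * gw x q d := by
  have hx0 : (0:ℝ) < x := by linarith
  set m := ⌊x⌋₊ with hm
  have hmx : (m:ℝ) ≤ x := Nat.floor_le hx0.le
  have hxm : x < (m:ℝ) + 1 := Nat.lt_floor_add_one x
  have step1 : Mw w x = ∑ n ∈ Icc 1 m, ∑ p ∈ n.divisorsAntidiagonal,
      ((if w p.1 = Letter.b then ((-1:ℝ))^(p.2+1) else 0) * (1 - ((p.1*p.2 : ℕ):ℝ)/x)) := by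
    unfold Mw
    rw [← hm]
    apply Finset.sum_congr rfl
    intro n hn
    rw [Nat.sum_divisorsAntidiagonal
      (f := fun a b => (if w a = Letter.b then ((-1:ℝ))^(b+1) else 0) * (1 - ((a*b : ℕ):ℝ)/x))]
    unfold Dw
    push_cast
    rw [Finset.sum_mul]
    apply Finset.sum_congr rfl
    intro d hd
    have hdvd : d ∣ n := (Nat.mem_divisors.mp hd).1
    have hc : ((d:ℝ) * ((n/d : ℕ):ℝ)) = (n:ℝ) := by
      exact_mod_cast congrArg (fun k : ℕ => (k:ℝ)) (Nat.mul_div_cancel' hdvd)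
    rw [hc]
  have step2 : ∑ n ∈ Icc 1 m, ∑ p ∈ n.divisorsAntidiagonal,
      ((if w p.1 = Letter.b then ((-1:ℝ))^(p.2+1) else 0) * (1 - ((p.1*p.2 : ℕ):ℝ)/x))
      = ∑ p ∈ (Icc 1 m).biUnion (fun n => n.divisorsAntidiagonal),
      ((if w p.1 = Letter.b then ((-1:ℝ))^(p.2+1) else 0) * (1 - ((p.1*p.2 : ℕ):ℝ)/x)) := by
    rw [Finset.sum_biUnion]
    intro n hn n' hn' hne
    apply Finset.disjoint_left.mpr
    intro p hp hp'
    rw [Nat.mem_divisorsAntidiagonal] at hp hp'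
    exact hne (hp.1.symm.trans hp'.1)
  have hbox : (Icc 1 m).biUnion (fun n => n.divisorsAntidiagonal)
      = (Icc 1 m ×ˢ Icc 1 m).filter (fun p => p.1 * p.2 ≤ m) := by
    ext p
    simp only [Finset.mem_biUnion, Finset.mem_filter, Finset.mem_product, Finset.mem_Icc,
      Nat.mem_divisorsAntidiagonal]
    constructor
    · rintro ⟨n, ⟨hn1, hn2⟩, heq, hne⟩
      have hp1 : 1 ≤ p.1 := by
        rcases Nat.eq_zero_or_pos p.1 with h | h
        · exact absurd (by rw [← heq, h, zero_mul]) hne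
        · exact h
      have hp2 : 1 ≤ p.2 := by
        rcases Nat.eq_zero_or_pos p.2 with h | h
        · exact absurd (by rw [← heq, h, mul_zero]) hne
        · exact h
      refine ⟨⟨⟨hp1, ?_⟩, hp2, ?_⟩, by omega⟩
      · calc p.1 ≤ p.1 * p.2 := Nat.le_mul_of_pos_right _ hp2
          _ ≤ m := by omega
      · calc p.2 ≤ p.1 * p.2 := Nat.le_mul_of_pos_left _ hp1
          _ ≤ m := by omega
    · rintro ⟨⟨⟨hp1, _⟩, hp2, _⟩, hle⟩
      exact ⟨p.1 * p.2, ⟨Nat.mul_pos hp1 hp2, hle⟩, rfl, (Nat.mul_pos hp1 hp2).ne'⟩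
  have step3 : ∑ p ∈ (Icc 1 m ×ˢ Icc 1 m).filter (fun p => p.1 * p.2 ≤ m),
      ((if w p.1 = Letter.b then ((-1:ℝ))^(p.2+1) else 0) * (1 - ((p.1*p.2 : ℕ):ℝ)/x))
      = ∑ p ∈ Icc 1 m ×ˢ Icc 1 m,
      ((if w p.1 = Letter.b then (1:ℝ) else 0) * ((-1:ℝ)^(p.2+1) * gw x p.2 p.1)) := by
    rw [Finset.sum_filter]
    apply Finset.sum_congr rfl
    intro p hp
    by_cases hc : p.1 * p.2 ≤ m
    · rw [if_pos hc]
      have h1 : ((p.1 * p.2 : ℕ):ℝ) ≤ x := by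
        calc ((p.1 * p.2 : ℕ):ℝ) ≤ (m:ℝ) := by exact_mod_cast hc
          _ ≤ x := hmx
      have hgw : gw x p.2 p.1 = 1 - ((p.1*p.2 : ℕ):ℝ)/x := by
        unfold gw
        rw [max_eq_right]
        · push_cast; ring_nf
        · rw [sub_nonneg, div_le_one hx0]; push_cast at h1 ⊢; linarith
      rw [hgw]
      by_cases hw : w p.1 = Letter.b <;> simp [hw]
    · rw [if_neg hc]
      have h1 : x < ((p.1 * p.2 : ℕ):ℝ) := by
        have : m + 1 ≤ p.1 * p.2 := by omega
        calc x < (m:ℝ) + 1 := hxm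
          _ ≤ ((p.1 * p.2 : ℕ):ℝ) := by exact_mod_cast this
      have hgw : gw x p.2 p.1 = 0 := by
        unfold gw
        rw [max_eq_left]
        rw [sub_nonpos]
        rw [le_div_iff₀ hx0]
        push_cast at h1 ⊢
        nlinarith
      rw [hgw]
      ring
  rw [step1, step2, hbox, step3, Finset.sum_product]
  rw [Finset.sum_comm]
  apply Finset.sum_congr rfl
  intro q hq
  rw [Finset.mul_sum]
  apply Finset.sum_congr rfl
  intro d hd
  ring

end Aux

set_option maxHeartbeats 3000000 in
theorem mollified_average_asymptotic
    (w : ℕ → Letter) (β : ℝ) (hβ0 : 0 < β) (hβ1 : β < 1)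
    (hbal : ∀ n : ℕ, 1 ≤ n →
      |β * n - (((Finset.Icc 1 n).filter fun j => w j = Letter.b).card : ℝ)| ≤ 1)
    (δ : ℝ) (hδ : 0 < δ) :
    (fun x : ℝ => Mw w x - β * Real.log 2 / 2 * x)
      =O[atTop] fun x : ℝ => x ^ ((1 : ℝ) / 3 + δ) := by
  rw [Asymptotics.isBigO_iff]
  refine ⟨10, ?_⟩
  filter_upwards [eventually_ge_atTop (16:ℝ)] with x hx16
  have hx1 : (1:ℝ) ≤ x := by linarith
  have hx0 : (0:ℝ) < x := by linarith
  set m := ⌊x⌋₊ with hm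
  set Q := ⌊x ^ ((2:ℝ)/3)⌋₊ with hQ
  have hx23pos : (0:ℝ) < x ^ ((2:ℝ)/3) := Real.rpow_pos_of_pos hx0 _
  have hx13pos : (0:ℝ) < x ^ ((1:ℝ)/3) := Real.rpow_pos_of_pos hx0 _
  have hcube : x ^ ((1:ℝ)/3) * x ^ ((2:ℝ)/3) = x := by
    rw [← Real.rpow_add hx0]
    norm_num
  have h813 : ((8:ℝ)) ^ ((1:ℝ)/3) = 2 := by
    rw [show (8:ℝ) = (2:ℝ) ^ (3:ℝ) by
      rw [show (3:ℝ) = ((3:ℕ):ℝ) by norm_num, Real.rpow_natCast]; norm_num]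
    rw [← Real.rpow_mul (by norm_num)]
    norm_num
  have h2cube : (2:ℝ) ≤ x ^ ((1:ℝ)/3) := by
    rw [← h813]
    exact Real.rpow_le_rpow (by norm_num) (by linarith) (by norm_num)
  have hx23sq : x ^ ((2:ℝ)/3) = (x ^ ((1:ℝ)/3))^2 := by
    rw [← Real.rpow_natCast (x ^ ((1:ℝ)/3)) 2, ← Real.rpow_mul hx0.le]
    norm_num
  have hx23ge4 : (4:ℝ) ≤ x ^ ((2:ℝ)/3) := by rw [hx23sq]; nlinarith
  have hx23half : x ^ ((2:ℝ)/3) ≤ x/2 := by nlinarith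
  have hx13ge1 : (1:ℝ) ≤ x ^ ((1:ℝ)/3) := by linarith
  have hQle : (Q:ℝ) ≤ x ^ ((2:ℝ)/3) := Nat.floor_le hx23pos.le
  have hQgt : x ^ ((2:ℝ)/3) < (Q:ℝ) + 1 := Nat.lt_floor_add_one _
  have hQ1 : 1 ≤ Q := Nat.le_floor (by exact_mod_cast (by linarith : (1:ℝ) ≤ x ^ ((2:ℝ)/3)))
  have hmgt : x - 1 < (m:ℝ) := Nat.sub_one_lt_floor x
  have hmx : (m:ℝ) ≤ x := Nat.floor_le hx0.le
  have hm1 : 1 ≤ m := Nat.le_floor (by exact_mod_cast hx1)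
  have hQm : Q + 1 ≤ m := by
    have h1 : (Q:ℝ) < (m:ℝ) := by linarith
    have h2 : Q < m := by exact_mod_cast h1
    omega
  have hQ1x : (Q:ℝ) + 1 ≤ x := by linarith
  set χ : ℕ → ℝ := fun d => if w d = Letter.b then (1:ℝ) else 0 with hχ
  have hχ0 : ∀ d, 0 ≤ χ d := by
    intro d; rw [hχ]; dsimp only; split_ifs <;> norm_num
  have hχ1 : ∀ d, χ d ≤ 1 := by
    intro d; rw [hχ]; dsimp only; split_ifs <;> norm_num
  set T : ℕ → ℝ := fun q => ∑ d ∈ Finset.Icc 1 m, χ d * gw x q d with hT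
  set E : ℕ → ℝ := fun q => ∑ d ∈ Finset.Icc 1 m, (χ d - β) * gw x q d with hE
  set G : ℕ → ℝ := fun q => ∑ d ∈ Finset.Icc 1 m, gw x q d with hG
  have hS : ∀ k, |∑ j ∈ Finset.Icc 1 k, (χ j - β)| ≤ 1 := by
    intro k
    rcases Nat.eq_zero_or_pos k with hk | hk
    · subst hk; simp
    · have hsum : ∑ j ∈ Finset.Icc 1 k, χ j
          = (((Finset.Icc 1 k).filter fun j => w j = Letter.b).card : ℝ) := by
        rw [hχ]
        rw [Finset.sum_boole]
    
      rw [Finset.sum_sub_distrib, hsum, Finset.sum_const, Nat.card_Icc]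
      simp only [Nat.add_sub_cancel, nsmul_eq_mul]
      rw [abs_sub_comm]
      have hb := hbal k hk
      rw [show (k:ℝ) * β = β * (k:ℝ) by ring]
      exact hb
  have hEbound : ∀ q, |E q| ≤ 1 := by
    intro q
    have hb := abel_bound (fun d => χ d - β) (fun d => gw x q d) 0 m 1 (fun k _ => hS k)
    have htel : ∑ d ∈ Finset.Ico 1 m, |gw x q d - gw x q (d+1)|
        = gw x q 1 - gw x q m := by
      rw [← telescope_Ico (fun d => gw x q d) 1 m hm1]
      apply Finset.sum_congr rfl
      intro d _
      exact abs_of_nonneg (by linarith [gw_anti_d hx0 q (Nat.le_succ d)])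
    rw [hE]
    refine hb.trans ?_
    rw [htel, one_mul, one_mul, abs_of_nonneg (gw_nonneg x q m)]
    have := gw_le_one hx0 q 1
    linarith
  have hEdiff : ∀ q, |E q - E (q+1)| ≤ 3 * (1/((q:ℝ)+1)) := by
    intro q
    have hdiff : E q - E (q+1)
        = ∑ d ∈ Finset.Icc 1 m, (χ d - β) * min ((d:ℝ)/x) (gw x q d) := by
      rw [hE]
      dsimp only
      rw [← Finset.sum_sub_distrib]
      apply Finset.sum_congr rfl
      intro d _
      rw [← gw_succ hx0 q d]
      ring
    have hM'0 : (0:ℝ) ≤ 1/((q:ℝ)+1) := by positivity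
    set u : ℕ → ℝ := fun d => min ((d:ℝ)/x) (1/((q:ℝ)+1)) with hu
    set v : ℕ → ℝ := fun d => min (gw x q d) (1/((q:ℝ)+1)) with hv
    have hmin : ∀ d : ℕ, min ((d:ℝ)/x) (gw x q d) = min (u d) (v d) := by
      intro d
      rw [hu, hv]
      dsimp only
      rw [min_min_min_comm, min_self]
      exact (min_eq_left (gw_min_le hx0 q d)).symm
    have hb := abel_bound (fun d => χ d - β) (fun d => min ((d:ℝ)/x) (gw x q d)) 0 m 1
      (fun k _ => hS k)
    rw [hdiff]
    refine hb.trans ?_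
    rw [one_mul, one_mul]
    have h1 : |min ((m:ℝ)/x) (gw x q m)| ≤ 1/((q:ℝ)+1) := by
      rw [abs_of_nonneg (le_min (by positivity) (gw_nonneg _ _ _))]
      exact gw_min_le hx0 q m
    have h2 : ∑ d ∈ Finset.Ico 1 m,
        |min ((d:ℝ)/x) (gw x q d) - min (((d+1:ℕ):ℝ)/x) (gw x q (d+1))|
        ≤ 2 * (1/((q:ℝ)+1)) := by
      have hstep : ∀ d : ℕ, |min ((d:ℝ)/x) (gw x q d) - min (((d+1:ℕ):ℝ)/x) (gw x q (d+1))|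
          ≤ (u (d+1) - u d) + (v d - v (d+1)) := by
        intro d
        rw [hmin d, hmin (d+1)]
        refine (abs_min_sub_min_le_max _ _ _ _).trans ?_
        have hcast : ((d:ℕ):ℝ) ≤ ((d+1:ℕ):ℝ) := by exact_mod_cast Nat.le_succ d
        have hud : u d ≤ u (d+1) := by
          rw [hu]
          dsimp only
          exact min_le_min (by gcongr) le_rfl
        have hvd : v (d+1) ≤ v d := by
          rw [hv]
          dsimp only
          exact min_le_min (gw_anti_d hx0 q (Nat.le_succ d)) le_rfl
        rw [abs_of_nonpos (by linarith), abs_of_nonneg (by linarith)]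
        rw [max_le_iff]
        have hu0 : (0:ℝ) ≤ u (d+1) - u d := by linarith
        have hv0 : (0:ℝ) ≤ v d - v (d+1) := by linarith
        constructor <;> linarith
      refine (Finset.sum_le_sum fun d _ => hstep d).trans ?_
      rw [Finset.sum_add_distrib]
      have ht1 : ∑ d ∈ Finset.Ico 1 m, (u (d+1) - u d) = u m - u 1 := by
        have hneg : ∀ d : ℕ, u (d+1) - u d = -(u d - u (d+1)) := fun d => by ring
        simp_rw [hneg]
        rw [Finset.sum_neg_distrib, telescope_Ico u 1 m hm1]
        ring
      have ht2 : ∑ d ∈ Finset.Ico 1 m, (v d - v (d+1)) = v 1 - v m :=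
        telescope_Ico v 1 m hm1
      rw [ht1, ht2]
      have hu0 : ∀ d : ℕ, 0 ≤ u d := fun d => le_min (by positivity) hM'0
      have huM : ∀ d : ℕ, u d ≤ 1/((q:ℝ)+1) := fun d => min_le_right _ _
      have hv0 : ∀ d : ℕ, 0 ≤ v d := fun d => le_min (gw_nonneg _ _ _) hM'0
      have hvM : ∀ d : ℕ, v d ≤ 1/((q:ℝ)+1) := fun d => min_le_right _ _
      linarith [hu0 1, huM m, hv0 m, hvM 1]
    linarith
  -- Tail bound
  have htail : |∑ q ∈ Finset.Icc (Q+1) m, (-1:ℝ)^(q+1) * T q| ≤ x ^ ((1:ℝ)/3) := by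
    have hswap : ∑ q ∈ Finset.Icc (Q+1) m, (-1:ℝ)^(q+1) * T q
        = ∑ d ∈ Finset.Icc 1 m, χ d * ∑ q ∈ Finset.Icc (Q+1) m, (-1:ℝ)^(q+1) * gw x q d := by
      rw [hT]
      dsimp only
      simp_rw [Finset.mul_sum]
      rw [Finset.sum_comm]
      apply Finset.sum_congr rfl
      intro d _
      apply Finset.sum_congr rfl
      intro q _
      ring
    rw [hswap]
    have hinner : ∀ d, |∑ q ∈ Finset.Icc (Q+1) m, (-1:ℝ)^(q+1) * gw x q d|
        ≤ gw x (Q+1) d := by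
      intro d
      have hb := abel_bound (fun q => (-1:ℝ)^(q+1)) (fun q => gw x q d) Q m 1
        (fun k _ => alt_partial Q k)
      have htel : ∑ q ∈ Finset.Ico (Q+1) m, |gw x q d - gw x (q+1) d|
          = gw x (Q+1) d - gw x m d := by
        rw [← telescope_Ico (fun q => gw x q d) (Q+1) m hQm]
        apply Finset.sum_congr rfl
        intro q _
        exact abs_of_nonneg (by linarith [gw_anti_q hx0 d (Nat.le_succ q)])
      refine hb.trans ?_
      rw [htel, one_mul, one_mul, abs_of_nonneg (gw_nonneg x m d)]
      linarith
    refine (Finset.abs_sum_le_sum_abs _ _).trans ?_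
    have hterm : ∀ d ∈ Finset.Icc 1 m,
        |χ d * ∑ q ∈ Finset.Icc (Q+1) m, (-1:ℝ)^(q+1) * gw x q d| ≤ gw x (Q+1) d := by
      intro d _
      rw [abs_mul, abs_of_nonneg (hχ0 d)]
      calc χ d * |∑ q ∈ Finset.Icc (Q+1) m, (-1:ℝ)^(q+1) * gw x q d|
          ≤ 1 * gw x (Q+1) d := mul_le_mul (hχ1 d) (hinner d) (abs_nonneg _) zero_le_one
        _ = gw x (Q+1) d := one_mul _
    refine (Finset.sum_le_sum hterm).trans ?_
    have hgs := gw_sum (x := x) (q := Q+1) (by omega) (by push_cast; linarith)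
    push_cast at hgs
    have habs := (abs_le.mp hgs).2
    have hb1 : x/(2*((Q:ℝ)+1)) ≤ x ^ ((1:ℝ)/3) / 2 := by
      rw [div_le_div_iff₀ (by positivity) (by norm_num)]
      nlinarith [mul_lt_mul_of_pos_left hQgt hx13pos, hcube]
    have hb2 : ((Q:ℝ)+1)/(8*x) ≤ 1/8 := by
      rw [div_le_div_iff₀ (by positivity) (by norm_num)]
      linarith
    rw [← hm] at habs
    linarith
  -- Part B
  have halt := alt_harmonic Q
  have hb1 : x/2 * (1/((Q:ℝ)+1)) ≤ x ^ ((1:ℝ)/3) / 2 := by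
    rw [show x/2 * (1/((Q:ℝ)+1)) = x/(2*((Q:ℝ)+1)) by rw [div_mul_div_comm, mul_one]]
    rw [div_le_div_iff₀ (by positivity) (by norm_num)]
    nlinarith [mul_lt_mul_of_pos_left hQgt hx13pos, hcube]
  have hρ : ∀ q ∈ Finset.Icc 1 Q, |G q - (x/(2*(q:ℝ)) - 1/2)| ≤ (q:ℝ)/(8*x) := by
    intro q hq
    rcases Finset.mem_Icc.mp hq with ⟨hq1, hqQ⟩
    have hqx : (q:ℝ) ≤ x := by
      have : (q:ℝ) ≤ (Q:ℝ) := by exact_mod_cast hqQ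
      linarith
    have h := gw_sum (x := x) (q := q) hq1 hqx
    rw [← hm] at h
    rw [hG]
    exact h
  have hPB : |(∑ q ∈ Finset.Icc 1 Q, (-1:ℝ)^(q+1) * G q) - x/2 * Real.log 2|
      ≤ x ^ ((1:ℝ)/3) + 1/2 := by
    have hdec : ∑ q ∈ Finset.Icc 1 Q, (-1:ℝ)^(q+1) * G q
        = x/2 * (∑ q ∈ Finset.Icc 1 Q, (-1:ℝ)^(q+1) * (1/(q:ℝ)))
          + (-(1/2)) * (∑ q ∈ Finset.Icc 1 Q, (-1:ℝ)^(q+1))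
          + ∑ q ∈ Finset.Icc 1 Q, (-1:ℝ)^(q+1) * (G q - (x/(2*(q:ℝ)) - 1/2)) := by
      rw [Finset.mul_sum, Finset.mul_sum, ← Finset.sum_add_distrib, ← Finset.sum_add_distrib]
      apply Finset.sum_congr rfl
      intro q hq
      have hq1 : 1 ≤ q := (Finset.mem_Icc.mp hq).1
      have hq0 : ((q:ℝ)) ≠ 0 := Nat.cast_ne_zero.mpr (by omega)
      field_simp
      ring
    rw [hdec]
    have e1 : |x/2 * (∑ q ∈ Finset.Icc 1 Q, (-1:ℝ)^(q+1) * (1/(q:ℝ))) - x/2 * Real.log 2|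
        ≤ x ^ ((1:ℝ)/3) / 2 := by
      rw [← mul_sub, abs_mul, abs_of_nonneg (by positivity : (0:ℝ) ≤ x/2)]
      calc x/2 * |(∑ q ∈ Finset.Icc 1 Q, (-1:ℝ)^(q+1) * (1/(q:ℝ))) - Real.log 2|
          ≤ x/2 * (1/((Q:ℝ)+1)) := by
            apply mul_le_mul_of_nonneg_left _ (by positivity)
            exact_mod_cast halt
        _ ≤ x ^ ((1:ℝ)/3) / 2 := hb1
    have e2 : |(-(1/2:ℝ)) * (∑ q ∈ Finset.Icc 1 Q, (-1:ℝ)^(q+1))| ≤ 1/2 := by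
      rw [abs_mul]
      have := alt_partial 0 Q
      calc |(-(1/2:ℝ))| * |∑ q ∈ Finset.Icc 1 Q, (-1:ℝ)^(q+1)|
          ≤ |(-(1/2:ℝ))| * 1 := by
            apply mul_le_mul_of_nonneg_left _ (abs_nonneg _)
            simpa using this
        _ = 1/2 := by norm_num
    have e3 : |∑ q ∈ Finset.Icc 1 Q, (-1:ℝ)^(q+1) * (G q - (x/(2*(q:ℝ)) - 1/2))|
        ≤ x ^ ((1:ℝ)/3) / 8 := by
      refine (Finset.abs_sum_le_sum_abs _ _).trans ?_
      have hterm : ∀ q ∈ Finset.Icc 1 Q,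
          |(-1:ℝ)^(q+1) * (G q - (x/(2*(q:ℝ)) - 1/2))| ≤ (q:ℝ)/(8*x) := by
        intro q hq
        rw [abs_mul, abs_pow, abs_neg, abs_one, one_pow, one_mul]
        exact hρ q hq
      refine (Finset.sum_le_sum hterm).trans ?_
      have hsum : ∑ q ∈ Finset.Icc 1 Q, (q:ℝ)/(8*x)
          = ((Q:ℝ)*((Q:ℝ)+1)/2) / (8*x) := by
        rw [← Finset.sum_div]
        rw [gauss_Icc]
      rw [hsum]
      rw [div_le_div_iff₀ (by positivity) (by norm_num)]
      have h43 : x ^ ((2:ℝ)/3) * x ^ ((2:ℝ)/3) = x ^ ((1:ℝ)/3) * x := by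
        nlinarith
      nlinarith [Nat.cast_nonneg (α := ℝ) Q]
    rw [show x/2 * (∑ q ∈ Finset.Icc 1 Q, (-1:ℝ)^(q+1) * (1/(q:ℝ)))
          + (-(1/2)) * (∑ q ∈ Finset.Icc 1 Q, (-1:ℝ)^(q+1))
          + (∑ q ∈ Finset.Icc 1 Q, (-1:ℝ)^(q+1) * (G q - (x/(2*(q:ℝ)) - 1/2)))
          - x/2 * Real.log 2
        = (x/2 * (∑ q ∈ Finset.Icc 1 Q, (-1:ℝ)^(q+1) * (1/(q:ℝ))) - x/2 * Real.log 2)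
          + (-(1/2)) * (∑ q ∈ Finset.Icc 1 Q, (-1:ℝ)^(q+1))
          + (∑ q ∈ Finset.Icc 1 Q, (-1:ℝ)^(q+1) * (G q - (x/(2*(q:ℝ)) - 1/2))) from by ring]
    refine (abs_add_three _ _ _).trans ?_
    linarith
  -- Part A
  have hPA : |∑ q ∈ Finset.Icc 1 Q, (-1:ℝ)^(q+1) * E q| ≤ 1 + 6 * x ^ ((1:ℝ)/3) := by
    have hb := abel_bound (fun q => (-1:ℝ)^(q+1)) E 0 Q 1
      (fun k _ => alt_partial 0 k)
    refine hb.trans ?_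
    rw [one_mul, one_mul]
    have h1 : |E Q| ≤ 1 := hEbound Q
    have h2 : ∑ q ∈ Finset.Ico 1 Q, |E q - E (q+1)| ≤ 6 * x ^ ((1:ℝ)/3) := by
      have step : ∀ q ∈ Finset.Ico 1 Q, |E q - E (q+1)| ≤ 3 * (1/(q:ℝ)) := by
        intro q hq
        have hq1 : 1 ≤ q := (Finset.mem_Ico.mp hq).1
        refine (hEdiff q).trans ?_
        have hq0 : (0:ℝ) < (q:ℝ) := by exact_mod_cast hq1
        have : (1:ℝ)/((q:ℝ)+1) ≤ 1/(q:ℝ) := by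
          apply one_div_le_one_div_of_le hq0
          linarith
        linarith
      refine (Finset.sum_le_sum step).trans ?_
      have hsub : ∑ q ∈ Finset.Ico 1 Q, 3 * (1/(q:ℝ))
          ≤ ∑ q ∈ Finset.Icc 1 Q, 3 * (1/(q:ℝ)) := by
        apply Finset.sum_le_sum_of_subset_of_nonneg
        · intro z hz
          simp only [Finset.mem_Ico, Finset.mem_Icc] at hz ⊢
          omega
        · intro i _ _
          positivity
      refine hsub.trans ?_
      rw [← Finset.mul_sum]
      have hh := harmonic_sqrt Q
      have hsq : Real.sqrt Q ≤ x ^ ((1:ℝ)/3) := by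
        have hs1 : Real.sqrt Q ≤ Real.sqrt (x ^ ((2:ℝ)/3)) := Real.sqrt_le_sqrt hQle
        have hs2 : Real.sqrt (x ^ ((2:ℝ)/3)) = x ^ ((1:ℝ)/3) := by
          rw [Real.sqrt_eq_rpow, ← Real.rpow_mul hx0.le]
          norm_num
        linarith
      calc 3 * ∑ q ∈ Finset.Icc 1 Q, 1/(q:ℝ) ≤ 3 * (2 * Real.sqrt Q) := by linarith
        _ ≤ 6 * x ^ ((1:ℝ)/3) := by linarith
    linarith
  -- assembly
  have hMw : Mw w x = ∑ q ∈ Finset.Icc 1 m, (-1:ℝ)^(q+1) * T q := by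
    rw [Mw_eq w hx1]
  have h1m : Finset.Icc 1 m = Finset.Ioc 0 m := by ext z; simp; omega
  have h1Q : Finset.Icc 1 Q = Finset.Ioc 0 Q := by ext z; simp; omega
  have hQm' : Finset.Icc (Q+1) m = Finset.Ioc Q m := by ext z; simp
  have hsplit2 : ∑ q ∈ Finset.Icc 1 m, (-1:ℝ)^(q+1) * T q
      = ∑ q ∈ Finset.Icc 1 Q, (-1:ℝ)^(q+1) * T q
        + ∑ q ∈ Finset.Icc (Q+1) m, (-1:ℝ)^(q+1) * T q := by
    rw [h1m, h1Q, hQm']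
    rw [Finset.sum_Ioc_consecutive _ (Nat.zero_le Q) (by omega : Q ≤ m)]
  have hhead : ∑ q ∈ Finset.Icc 1 Q, (-1:ℝ)^(q+1) * T q
      = (∑ q ∈ Finset.Icc 1 Q, (-1:ℝ)^(q+1) * E q)
        + β * ∑ q ∈ Finset.Icc 1 Q, (-1:ℝ)^(q+1) * G q := by
    rw [Finset.mul_sum, ← Finset.sum_add_distrib]
    apply Finset.sum_congr rfl
    intro q _
    have hTq : T q = E q + β * G q := by
      rw [hT, hE, hG]
      dsimp only
      rw [Finset.mul_sum, ← Finset.sum_add_distrib]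
      apply Finset.sum_congr rfl
      intro d _
      ring
    rw [hTq]
    ring
  have key : |Mw w x - β * Real.log 2 / 2 * x| ≤ 10 * x ^ ((1:ℝ)/3) := by
    have hdecomp : Mw w x - β * Real.log 2 / 2 * x
        = (∑ q ∈ Finset.Icc 1 Q, (-1:ℝ)^(q+1) * E q)
          + β * ((∑ q ∈ Finset.Icc 1 Q, (-1:ℝ)^(q+1) * G q) - x/2 * Real.log 2)
          + (∑ q ∈ Finset.Icc (Q+1) m, (-1:ℝ)^(q+1) * T q) := by
      rw [hMw, hsplit2, hhead]
      ring
    rw [hdecomp]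
    have habs1 := abs_add_le ((∑ q ∈ Finset.Icc 1 Q, (-1:ℝ)^(q+1) * E q)
      + β * ((∑ q ∈ Finset.Icc 1 Q, (-1:ℝ)^(q+1) * G q) - x/2 * Real.log 2))
      (∑ q ∈ Finset.Icc (Q+1) m, (-1:ℝ)^(q+1) * T q)
    have habs2 := abs_add_le (∑ q ∈ Finset.Icc 1 Q, (-1:ℝ)^(q+1) * E q)
      (β * ((∑ q ∈ Finset.Icc 1 Q, (-1:ℝ)^(q+1) * G q) - x/2 * Real.log 2))
    have hβabs : |β * ((∑ q ∈ Finset.Icc 1 Q, (-1:ℝ)^(q+1) * G q) - x/2 * Real.log 2)|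
        ≤ x ^ ((1:ℝ)/3) + 1/2 := by
      rw [abs_mul, abs_of_pos hβ0]
      calc β * |(∑ q ∈ Finset.Icc 1 Q, (-1:ℝ)^(q+1) * G q) - x/2 * Real.log 2|
          ≤ 1 * (x ^ ((1:ℝ)/3) + 1/2) :=
            mul_le_mul hβ1.le hPB (abs_nonneg _) zero_le_one
        _ = x ^ ((1:ℝ)/3) + 1/2 := one_mul _
    linarith
  rw [Real.norm_eq_abs, Real.norm_eq_abs]
  have hmono : x ^ ((1:ℝ)/3) ≤ x ^ ((1:ℝ)/3 + δ) :=
    Real.rpow_le_rpow_of_exponent_le hx1 (by linarith)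
  rw [abs_of_nonneg (Real.rpow_nonneg hx0.le _)]
  calc |Mw w x - β * Real.log 2 / 2 * x| ≤ 10 * x ^ ((1:ℝ)/3) := key
    _ ≤ 10 * x ^ ((1:ℝ)/3 + δ) := by linarith
end
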